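/- arXiv:2605.18712 — 6 statements merged into one kernel-verified Lean document; each statement's English description precedes it below -/
import Mathlib

section
/- Let G be a connected graph on n vertices, k a positive integer, and define t_i = (n log n)^{i/k} for i = 0,...,k. Suppose v is a vertex of G such that for every i in {0,...,k-1}, the number of vertices u in the closed ball B(v, 2^i - 1) satisfying |B(u, 2^i)| ≤ t_{i+1} is strictly less than t_i. Then for every i in {0,...,k}, the closed ball B(v, 2^i - 1) contains at least t_i vertices. -/
open scoped Classical

/-- The closed ball of radius `r` around `v` in the graph metric of `G`. -/
noncomputable def gball {V : Type*} [Fintype V] (G : SimpleGraph V) (v : V) (r : ℕ) : Finset V :=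
  Finset.univ.filter fun u => G.dist v u ≤ r

theorem stmt0 {V : Type*} [Fintype V] (G : SimpleGraph V) (hG : G.Connected)
    (n : ℕ) (hn : n = Fintype.card V) (hn2 : 2 ≤ n) (k : ℕ) (hk : 1 ≤ k) (v : V)
    (t : ℕ → ℝ) (ht : ∀ i, t i = ((n : ℝ) * Real.logb 2 n) ^ ((i : ℝ) / (k : ℝ)))
    (hyp : ∀ i < k,
      ((((gball G v (2 ^ i - 1)).filter
          fun u => ((gball G u (2 ^ i)).card : ℝ) ≤ t (i + 1)).card : ℝ)) < t i) :
    ∀ i ≤ k, t i ≤ ((gball G v (2 ^ i - 1)).card : ℝ) := by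
  intro i hi
  induction i with
  | zero =>
    rw [ht]
    simp only [Nat.cast_zero, zero_div, Real.rpow_zero]
    have hv : v ∈ gball G v (2 ^ 0 - 1) := by
      simp [gball]
    have h1 : 1 ≤ (gball G v (2 ^ 0 - 1)).card := Finset.card_pos.mpr ⟨v, hv⟩
    exact_mod_cast h1
  | succ i ih =>
    have hik : i < k := hi
    have hti := ih (le_of_lt hik)
    have hlt := hyp i hik
    have hne : ∃ u ∈ gball G v (2 ^ i - 1),
        ¬ ((gball G u (2 ^ i)).card : ℝ) ≤ t (i + 1) := by
      by_contra h
      push_neg at h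
      have heq : (gball G v (2 ^ i - 1)).filter
          (fun u => ((gball G u (2 ^ i)).card : ℝ) ≤ t (i + 1)) = gball G v (2 ^ i - 1) :=
        Finset.filter_true_of_mem h
      rw [heq] at hlt
      linarith
    obtain ⟨u, hu, hcard⟩ := hne
    push_neg at hcard
    have hsub2 : gball G u (2 ^ i) ⊆ gball G v (2 ^ (i + 1) - 1) := by
      intro w hw
      simp only [gball, Finset.mem_filter, Finset.mem_univ, true_and] at hu hw ⊢
      have htri := hG.dist_triangle (u := v) (v := u) (w := w)
      have h2 : 1 ≤ 2 ^ i := Nat.one_le_two_pow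
      have h3 : (2 : ℕ) ^ (i + 1) = 2 ^ i * 2 := pow_succ 2 i
      omega
    have : t (i + 1) < ((gball G v (2 ^ (i+1) - 1)).card : ℝ) := calc t (i + 1) < ((gball G u (2 ^ i)).card : ℝ) := hcard
      _ ≤ _ := Nat.cast_le.mpr (Finset.card_le_card hsub2)
    linarith
end

section
/- Let G be a finite connected graph, let U be a nonempty vertex subset, and assign to each edge e the weight w_U(e) = (1−ε)^{dist(e,U)}, where dist(e,U) is the length of the shortest path meeting both e and U. Then the total weight satisfies Σ_e w_U(e) ≤ Σ_{e ∈ E(G)} Σ_{k ≥ 0, k = dist(e,U)} (1−ε)^k, and in particular for the weighted random walk on (G, w_U), the expected hitting time of U from any vertex v is at most 2 ε^{-1} |E(G)|. -/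
open scoped Classical

/-- Distance from a vertex `x` to a vertex set `U` in the graph metric. -/
noncomputable def vtxDist {V : Type*} (G : SimpleGraph V) (U : Set V) (x : V) : ℕ :=
  sInf ((fun u => G.dist x u) '' U)

/-- Distance from an edge to a vertex set `U`: the minimum distance of an endpoint to `U`. -/
noncomputable def edgeDist {V : Type*} (G : SimpleGraph V) (U : Set V) : Sym2 V → ℕ :=
  Sym2.lift ⟨fun a b => min (vtxDist G U a) (vtxDist G U b), fun a b => min_comm _ _⟩

open Finset

section auxlemmas
variable {V : Type*} {G : SimpleGraph V} {U : Set V}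

lemma vtxDist_le {u : V} (hu : u ∈ U) (x : V) : vtxDist G U x ≤ G.dist x u :=
  Nat.sInf_le ⟨u, hu, rfl⟩

lemma vtxDist_exists (hU : U.Nonempty) (x : V) : ∃ u ∈ U, G.dist x u = vtxDist G U x := by
  have := Nat.sInf_mem (s := (fun u => G.dist x u) '' U) (hU.image _)
  obtain ⟨u, hu, h⟩ := this
  exact ⟨u, hu, h⟩

lemma vtxDist_zero_of_mem {x : V} (hx : x ∈ U) : vtxDist G U x = 0 :=
  Nat.le_zero.mp (by simpa [SimpleGraph.dist_self] using vtxDist_le hx x)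

lemma mem_of_vtxDist_zero (hG : G.Connected) (hU : U.Nonempty) {x : V}
    (hx : vtxDist G U x = 0) : x ∈ U := by
  obtain ⟨u, hu, h⟩ := vtxDist_exists (G := G) hU x
  rw [hx] at h
  rwa [hG.dist_eq_zero_iff.mp h]

lemma vtxDist_adj_le (hG : G.Connected) (hU : U.Nonempty) {x y : V} (hxy : G.Adj x y) :
    vtxDist G U y ≤ vtxDist G U x + 1 := by
  obtain ⟨u, hu, h⟩ := vtxDist_exists (G := G) hU x
  have h1 : G.dist y u ≤ G.dist y x + G.dist x u := hG.dist_triangle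
  have h2 : G.dist y x = 1 := SimpleGraph.dist_eq_one_iff_adj.mpr hxy.symm
  have h3 : vtxDist G U y ≤ G.dist y u := vtxDist_le hu y
  omega

lemma exists_adj_vtxDist (hG : G.Connected) (hU : U.Nonempty) {x : V} {d : ℕ}
    (hx : vtxDist G U x = d + 1) : ∃ y, G.Adj x y ∧ vtxDist G U y = d := by
  obtain ⟨u, hu, h⟩ := vtxDist_exists (G := G) hU x
  rw [hx] at h
  obtain ⟨p, hp⟩ := SimpleGraph.exists_walk_of_dist_ne_zero (G := G) (u := x) (v := u) (by omega)
  cases p with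
  | nil => simp [SimpleGraph.dist_self] at h
  | cons hadj q =>
    rename_i y
    refine ⟨y, hadj, ?_⟩
    have h1 : G.dist y u ≤ q.length := SimpleGraph.dist_le q
    have h2 : vtxDist G U y ≤ d := by
      have := vtxDist_le (G := G) hu y
      simp [SimpleGraph.Walk.length_cons] at hp
      omega
    have h3 : vtxDist G U x ≤ vtxDist G U y + 1 := vtxDist_adj_le hG hU hadj.symm
    omega

lemma edgeDist_mk (a b : V) :
    edgeDist G U s(a, b) = min (vtxDist G U a) (vtxDist G U b) := rfl

end auxlemmas

section mpdir
variable {V : Type*} [Fintype V] [DecidableEq V] {G : SimpleGraph V}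

/-- Maximum principle. -/
lemma maxPrinciple (hG : G.Connected) (p : V → V → ℝ)
    (hp0 : ∀ x y, 0 ≤ p x y)
    (hppos : ∀ x y, G.Adj x y → 0 < p x y)
    (S : Set V) (u0 : V) (hu0 : u0 ∉ S)
    (hsum : ∀ x ∈ S, ∑ y, p x y = 1)
    (ψ : V → ℝ)
    (hharm : ∀ x ∈ S, ψ x = ∑ y, p x y * ψ y)
    (hbd : ∀ x, x ∉ S → ψ x ≤ 0) :
    ∀ x, ψ x ≤ 0 := by
  have hne : (univ : Finset V).Nonempty := ⟨u0, mem_univ u0⟩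
  obtain ⟨x0, -, hmax⟩ := Finset.exists_max_image univ ψ hne
  set M := ψ x0 with hM
  by_cases hMle : M ≤ 0
  · exact fun x => le_trans (hmax x (mem_univ x)) hMle
  push_neg at hMle
  exfalso
  have step : ∀ x, ψ x = M → ∀ y, G.Adj x y → ψ y = M := by
    intro x hx y hxy
    have hxS : x ∈ S := by
      by_contra hxS
      exact absurd (hx ▸ hbd x hxS) (not_le.mpr hMle)
    have hz : ∑ z, p x z * (M - ψ z) = 0 := by
      have : ∑ z, p x z * (M - ψ z) = M * (∑ z, p x z) - ∑ z, p x z * ψ z := by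
        rw [Finset.mul_sum, ← Finset.sum_sub_distrib]
        exact Finset.sum_congr rfl fun z _ => by ring
      rw [this, hsum x hxS, ← hharm x hxS, mul_one, hx]
      ring
    have hterm : ∀ z ∈ (univ : Finset V), p x z * (M - ψ z) = 0 := by
      refine (Finset.sum_eq_zero_iff_of_nonneg ?_).mp hz
      intro z _
      exact mul_nonneg (hp0 x z) (by linarith [hmax z (mem_univ z)])
    have := hterm y (mem_univ y)
    have hpy := hppos x y hxy
    have : M - ψ y = 0 := by
      rcases mul_eq_zero.mp this with hc | hc
      · exact absurd hc (ne_of_gt hpy)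
      · exact hc
    linarith
  have key : ∀ (a b : V) (wk : G.Walk a b), ψ a = M → ψ b = M := by
    intro a b wk
    induction wk with
    | nil => exact id
    | cons hadj q ih => exact fun hx => ih (step _ hx _ hadj)
  obtain ⟨wk⟩ := hG.preconnected x0 u0
  exact absurd ((key x0 u0 wk rfl) ▸ hbd u0 hu0) (not_le.mpr hMle)

/-- Existence of a solution of the Dirichlet problem (expected hitting time of `Sᶜ`). -/
lemma dirichlet (p : V → V → ℝ)
    (hp0 : ∀ x y, 0 ≤ p x y)
    (S : Finset V) (u0 : V)
    (hsum : ∀ x, ∑ y, p x y = 1)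
    (mp : ∀ (ψ : V → ℝ), (∀ x ∈ S, ψ x = ∑ y, p x y * ψ y) → (∀ x, x ∉ S → ψ x ≤ 0) →
      ∀ x, ψ x ≤ 0) :
    ∃ g : V → ℝ, (∀ x ∈ S, g x = 1 + ∑ y, p x y * g y) ∧ (∀ x, x ∉ S → g x = 0) ∧
      (∀ x, 0 ≤ g x) := by
  classical
  set A : Matrix {x // x ∈ S} {x // x ∈ S} ℝ :=
    (1 : Matrix {x // x ∈ S} {x // x ∈ S} ℝ) - Matrix.of (fun i j => p i.1 j.1) with hA
  let ext : ({x // x ∈ S} → ℝ) → V → ℝ := fun f x => if hx : x ∈ S then f ⟨x, hx⟩ else 0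
  have hext_sum : ∀ (f : {x // x ∈ S} → ℝ) (x : V),
      ∑ y, p x y * ext f y = ∑ j : {x // x ∈ S}, p x j.1 * f j := by
    intro f x
    have h1 : ∑ y, p x y * ext f y = ∑ y ∈ S, p x y * ext f y := by
      refine (Finset.sum_subset (subset_univ S) ?_).symm
      intro y _ hy
      simp [ext, hy]
    rw [h1, Finset.univ_eq_attach, ← Finset.sum_attach S (fun y => p x y * ext f y)]
    apply Finset.sum_congr rfl
    intro j _
    simp [ext, j.2]
  have hinj : Function.Injective (Matrix.mulVecLin A) := by
    rw [injective_iff_map_eq_zero]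
    intro f hf
    have heq : ∀ i : {x // x ∈ S}, f i = ∑ j : {x // x ∈ S}, p i.1 j.1 * f j := by
      intro i
      have h1 : A.mulVec f i = 0 := by rw [show A.mulVec f = 0 from hf]; rfl
      rw [hA, Matrix.sub_mulVec, Matrix.one_mulVec] at h1
      have h2 : (Matrix.of (fun i j => p i.1 j.1)).mulVec f i
          = ∑ j : {x // x ∈ S}, p i.1 j.1 * f j := by
        simp [Matrix.mulVec, dotProduct, Finset.univ_eq_attach]
      have h3 := sub_eq_zero.mp h1
      rw [h2] at h3
      exact h3
    have hharm : ∀ (f' : {x // x ∈ S} → ℝ),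
        (∀ i, f' i = ∑ j : {x // x ∈ S}, p i.1 j.1 * f' j) →
        ∀ x ∈ S, ext f' x = ∑ y, p x y * ext f' y := by
      intro f' hf' x hx
      rw [hext_sum]
      have : ext f' x = f' ⟨x, hx⟩ := by simp [ext, hx]
      rw [this, hf' ⟨x, hx⟩]
    have hb : ∀ (f' : {x // x ∈ S} → ℝ) (x : V), x ∉ S → ext f' x ≤ 0 := by
      intro f' x hx; simp [ext, hx]
    have h1 : ∀ x, ext f x ≤ 0 := mp (ext f) (hharm f heq) (hb f)
    have heqneg : ∀ i : {x // x ∈ S}, (-f) i = ∑ j : {x // x ∈ S}, p i.1 j.1 * (-f) j := by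
      intro i
      simp only [Pi.neg_apply, mul_neg, Finset.sum_neg_distrib, neg_inj]
      exact heq i
    have h2 : ∀ x, ext (-f) x ≤ 0 := mp (ext (-f)) (hharm (-f) heqneg) (hb (-f))
    funext i
    have ha := h1 i.1
    have hbb := h2 i.1
    have hext_eq : ∀ (f' : {x // x ∈ S} → ℝ) (i : {x // x ∈ S}), ext f' i.1 = f' i := by
      intro f' i; simp [ext, i.2]
    rw [hext_eq] at ha
    rw [hext_eq] at hbb
    simp only [Pi.neg_apply] at hbb
    have : f i = 0 := le_antisymm ha (by linarith)
    simpa using this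
  have hsurj : Function.Surjective (Matrix.mulVecLin A) :=
    (LinearMap.injective_iff_surjective).mp hinj
  obtain ⟨g', hg'⟩ := hsurj (fun _ => 1)
  have hg'eq : ∀ i : {x // x ∈ S}, g' i = 1 + ∑ j : {x // x ∈ S}, p i.1 j.1 * g' j := by
    intro i
    have h1 : A.mulVec g' i = 1 := by
      rw [show A.mulVec g' = fun _ => (1:ℝ) from hg']
    rw [hA, Matrix.sub_mulVec, Matrix.one_mulVec] at h1
    have h2 : (Matrix.of (fun i j => p i.1 j.1)).mulVec g' i
        = ∑ j : {x // x ∈ S}, p i.1 j.1 * g' j := by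
      simp [Matrix.mulVec, dotProduct, Finset.univ_eq_attach]
    have := sub_eq_iff_eq_add.mp h1
    rw [h2] at this
    exact this
  refine ⟨ext g', ?_, ?_, ?_⟩
  · intro x hx
    have h1 : ext g' x = g' ⟨x, hx⟩ := by simp [ext, hx]
    rw [h1, hg'eq ⟨x, hx⟩, hext_sum]
  · intro x hx; simp [ext, hx]
  · obtain ⟨x0, -, hmin⟩ := Finset.exists_min_image univ (ext g') ⟨u0, mem_univ u0⟩
    have hx0 : 0 ≤ ext g' x0 := by
      by_cases hx0S : x0 ∈ S
      · exfalso
        have h1 : ext g' x0 = g' ⟨x0, hx0S⟩ := by simp [ext, hx0S]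
        have h2 : ext g' x0 = 1 + ∑ y, p x0 y * ext g' y := by
          rw [hext_sum, h1, hg'eq ⟨x0, hx0S⟩]
        have h3 : ∑ y, p x0 y * ext g' y ≥ ∑ y, p x0 y * ext g' x0 := by
          apply Finset.sum_le_sum
          intro y _
          exact mul_le_mul_of_nonneg_left (hmin y (mem_univ y)) (hp0 x0 y)
        rw [← Finset.sum_mul, hsum x0, one_mul] at h3
        linarith
      · simp [ext, hx0S]
    exact fun x => le_trans hx0 (hmin x (mem_univ x))

end mpdir

lemma geom_aux {ε : ℝ} (hε0 : 0 < ε) (hε1 : ε < 1) (k D : ℕ) :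
    ∑ j ∈ range D, (if j ≤ k then ((1-ε)^j)⁻¹ * (1-ε)^k else 0) ≤ ε⁻¹ := by
  have h1 : (0:ℝ) < 1 - ε := by linarith
  have hterm : ∀ j, j ≤ k → ((1-ε)^j)⁻¹ * (1-ε)^k = (1-ε)^(k-j) := by
    intro j hj
    rw [show k = j + (k - j) by omega, pow_add]
    rw [show j + (k-j) - j = k - j by omega]
    field_simp
  have hchain : ∑ j ∈ range D, (if j ≤ k then ((1-ε)^j)⁻¹ * (1-ε)^k else 0)
      = ∑ j ∈ (range D).filter (· ≤ k), (1-ε)^(k-j) := by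
    rw [Finset.sum_filter]
    exact Finset.sum_congr rfl fun j _ => by
      by_cases hj : j ≤ k
      · simp [hj, hterm j hj]
      · simp [hj]
  rw [hchain]
  have himg : ∑ j ∈ (range D).filter (· ≤ k), (1-ε)^(k-j)
      = ∑ i ∈ ((range D).filter (· ≤ k)).image (k - ·), (1-ε)^i := by
    rw [Finset.sum_image]
    intro a ha b hb hab
    simp only [Finset.mem_coe, Finset.mem_filter, Finset.mem_range] at ha hb hab
    omega
  rw [himg]
  have hsub : ((range D).filter (· ≤ k)).image (k - ·) ⊆ range (k+1) := by
    intro i hi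
    simp only [Finset.mem_image, Finset.mem_filter, Finset.mem_range] at hi ⊢
    omega
  have hle : ∑ i ∈ ((range D).filter (· ≤ k)).image (k - ·), (1-ε)^i
      ≤ ∑ i ∈ range (k+1), (1-ε)^i := by
    apply Finset.sum_le_sum_of_subset_of_nonneg hsub
    intro i _ _
    positivity
  refine le_trans hle ?_
  have hgm := geom_sum_mul (x := (1-ε)) (n := k+1)
  have hpow : (0:ℝ) ≤ (1-ε)^(k+1) := by positivity
  have h2 : (∑ i ∈ range (k+1), (1-ε)^i) * ε ≤ 1 := by nlinarith [hgm]
  calc ∑ i ∈ range (k+1), (1-ε)^i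
      = ((∑ i ∈ range (k+1), (1-ε)^i) * ε) * ε⁻¹ := by field_simp
    _ ≤ 1 * ε⁻¹ := by
        apply mul_le_mul_of_nonneg_right h2
        positivity
    _ = ε⁻¹ := one_mul _

/-- For the weighted random walk on `(G, w_U)` with `w_U(e) = (1−ε)^{dist(e,U)}`,
the total edge weight is at most `∑_e (1−ε)^{dist(e,U)}`, and the expected hitting time
of `U` from any vertex is at most `2 ε⁻¹ |E(G)|`. The expected hitting times `h x` are
characterized by `h x = 0` on `U` and `h x = 1 + ∑_y p(x,y) h(y)` off `U`, where `p` is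
the kernel proportional to incident edge weights. -/
theorem stmt9 {V : Type*} [Fintype V] [DecidableEq V] (G : SimpleGraph V)
    [DecidableRel G.Adj] (hG : G.Connected)
    (ε : ℝ) (hε0 : 0 < ε) (hε1 : ε < 1)
    (U : Finset V) (hU : U.Nonempty)
    (w : Sym2 V → ℝ) (hw : ∀ e, w e = (1 - ε) ^ edgeDist G (U : Set V) e)
    (p : V → V → ℝ)
    (hp : ∀ x y, p x y =
      if G.Adj x y then w s(x, y) / ∑ z ∈ G.neighborFinset x, w s(x, z) else 0)
    (h : V → ℝ) (h0 : ∀ x ∈ U, h x = 0)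
    (hh : ∀ x, x ∉ U → h x = 1 + ∑ y, p x y * h y) :
    (∑ e ∈ G.edgeFinset, w e) ≤
        (∑ e ∈ G.edgeFinset, (1 - ε) ^ edgeDist G (U : Set V) e) ∧
    ∀ v : V, h v ≤ 2 * ε⁻¹ * (G.edgeFinset.card : ℝ) := by
  refine ⟨le_of_eq (Finset.sum_congr rfl fun e _ => hw e), ?_⟩
  intro v
  have hRHSnn : (0:ℝ) ≤ 2 * ε⁻¹ * (G.edgeFinset.card : ℝ) := by positivity
  rcases subsingleton_or_nontrivial V with hs | hn
  · obtain ⟨u, hu⟩ := hU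
    rw [Subsingleton.elim v u, h0 u hu]
    exact hRHSnn
  have hε' : (0:ℝ) < 1 - ε := by linarith
  have hwpos : ∀ e, 0 < w e := fun e => by rw [hw]; positivity
  -- every vertex has a neighbor
  have hadj_ex : ∀ x : V, ∃ y, G.Adj x y := by
    intro x
    obtain ⟨y, hy⟩ := exists_ne x
    obtain ⟨wk⟩ := hG.preconnected x y
    cases wk with
    | nil => exact absurd rfl hy
    | cons hadj q => exact ⟨_, hadj⟩
  set W : V → ℝ := fun x => ∑ z ∈ G.neighborFinset x, w s(x, z) with hWdef
  have hWpos : ∀ x, 0 < W x := by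
    intro x
    apply Finset.sum_pos (fun z _ => hwpos _)
    obtain ⟨y, hy⟩ := hadj_ex x
    exact ⟨y, (SimpleGraph.mem_neighborFinset G x y).mpr hy⟩
  have hp0 : ∀ x y, 0 ≤ p x y := by
    intro x y
    rw [hp]
    split
    · exact le_of_lt (div_pos (hwpos _) (hWpos x))
    · exact le_refl 0
  have hppos : ∀ x y, G.Adj x y → 0 < p x y := by
    intro x y hxy
    rw [hp, if_pos hxy]
    exact div_pos (hwpos _) (hWpos x)
  have hpsum : ∀ x, ∑ y, p x y = 1 := by
    intro x
    have h1 : ∑ y, p x y = ∑ y ∈ G.neighborFinset x, w s(x, y) / W x := by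
      rw [← Finset.sum_subset (Finset.subset_univ (G.neighborFinset x))]
      · exact Finset.sum_congr rfl fun y hy => by
          rw [hp, if_pos ((SimpleGraph.mem_neighborFinset G x y).mp hy)]
      · intro y _ hy
        rw [hp, if_neg (fun hc => hy ((SimpleGraph.mem_neighborFinset G x y).mpr hc))]
    rw [h1, ← Finset.sum_div, div_self (ne_of_gt (hWpos x))]
  -- directed edge weights
  set w' : V → V → ℝ := fun x y => if G.Adj x y then w s(x, y) else 0 with hw'def
  have hw'nn : ∀ x y, 0 ≤ w' x y := by
    intro x y; simp only [hw'def]; split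
    · exact le_of_lt (hwpos _)
    · exact le_refl 0
  have hw'sym : ∀ x y, w' x y = w' y x := by
    intro x y
    simp only [hw'def]
    by_cases hxy : G.Adj x y
    · rw [if_pos hxy, if_pos hxy.symm, Sym2.eq_swap]
    · rw [if_neg hxy, if_neg (fun hc => hxy hc.symm)]
  have hWalt : ∀ x, W x = ∑ y, w' x y := by
    intro x
    have h1 : ∑ y, w' x y = ∑ y ∈ G.neighborFinset x, w' x y := by
      refine (Finset.sum_subset (Finset.subset_univ _) ?_).symm
      intro y _ hy
      simp only [hw'def]
      rw [if_neg (fun hc => hy ((SimpleGraph.mem_neighborFinset G x y).mpr hc))]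
    simp only [hWdef]
    rw [h1]
    refine Finset.sum_congr rfl fun y hy => ?_
    simp only [hw'def]
    rw [if_pos ((SimpleGraph.mem_neighborFinset G x y).mp hy)]
  have hWp : ∀ x y, W x * p x y = w' x y := by
    intro x y
    rw [hp]
    simp only [hw'def]
    by_cases hxy : G.Adj x y
    · rw [if_pos hxy, if_pos hxy, mul_div_cancel₀ _ (ne_of_gt (hWpos x))]
    · rw [if_neg hxy, if_neg hxy, mul_zero]
  set D : V → ℕ := fun x => vtxDist G (U : Set V) x with hDdef
  obtain ⟨u0, hu0U⟩ := hU
  have hUset : (U : Set V).Nonempty := ⟨u0, Finset.mem_coe.mpr hu0U⟩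
  have hDmem : ∀ x, x ∈ U → D x = 0 := fun x hx => vtxDist_zero_of_mem (Finset.mem_coe.mpr hx)
  have hDmem' : ∀ x, D x = 0 → x ∈ U := fun x hx =>
    Finset.mem_coe.mp (mem_of_vtxDist_zero hG hUset hx)
  -- nonnegativity of h
  have hhnn : ∀ x, 0 ≤ h x := by
    obtain ⟨x0, -, hmin⟩ := Finset.exists_min_image univ h univ_nonempty
    have hx0 : 0 ≤ h x0 := by
      by_cases hx0U : x0 ∈ U
      · rw [h0 x0 hx0U]
      · exfalso
        have h2 := hh x0 hx0U
        have h3 : ∑ y, p x0 y * h y ≥ ∑ y, p x0 y * h x0 :=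
          Finset.sum_le_sum fun y _ =>
            mul_le_mul_of_nonneg_left (hmin y (mem_univ y)) (hp0 x0 y)
        rw [← Finset.sum_mul, hpsum x0, one_mul] at h3
        linarith
    exact fun x => le_trans hx0 (hmin x (mem_univ x))
  -- level sums
  set T : ℕ → ℝ := fun d => ((1-ε)^d)⁻¹ * ∑ x ∈ univ.filter (fun z => d + 1 ≤ D z), W x
    with hTdef
  set B : ℕ → ℝ := fun d => ∑ j ∈ range d, T j with hBdef
  have hTnn : ∀ d, 0 ≤ T d := by
    intro d
    apply mul_nonneg (by positivity)
    exact Finset.sum_nonneg fun x _ => le_of_lt (hWpos x)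
  -- main induction
  have claim : ∀ d, ∀ x, D x ≤ d → h x ≤ B d := by
    intro d
    induction d with
    | zero =>
      intro x hx
      rw [h0 x (hDmem' x (Nat.le_zero.mp hx))]
      simp [hBdef]
    | succ d ih =>
      intro x hx
      have hBsucc : B (d+1) = B d + T d := by simp [hBdef, Finset.sum_range_succ]
      by_cases hxd : D x ≤ d
      · rw [hBsucc]; linarith [ih x hxd, hTnn d]
      have hxd1 : D x = d + 1 := by omega
      set S : Finset V := univ.filter (fun z => d + 1 ≤ D z) with hSdef
      have hu0S : u0 ∉ S := by
        simp only [hSdef, Finset.mem_filter]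
        rw [hDmem u0 hu0U]
        simp
      have hSnotU : ∀ z, z ∈ S → z ∉ U := by
        intro z hz hzU
        simp only [hSdef, Finset.mem_filter] at hz
        rw [hDmem z hzU] at hz
        omega
      have mpS : ∀ (ψ : V → ℝ), (∀ z ∈ S, ψ z = ∑ y, p z y * ψ y) →
          (∀ z, z ∉ S → ψ z ≤ 0) → ∀ z, ψ z ≤ 0 := by
        intro ψ h1 h2
        exact maxPrinciple hG p hp0 hppos (↑S) u0 (fun hc => hu0S (Finset.mem_coe.mp hc))
          (fun z _ => hpsum z) ψ (fun z hz => h1 z (Finset.mem_coe.mp hz))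
          (fun z hz => h2 z (fun hc => hz (Finset.mem_coe.mpr hc)))
      obtain ⟨g, hg1, hg2, hg3⟩ := dirichlet p hp0 S u0 hpsum mpS
      -- comparison: h ≤ B d + g on S
      have hcomp : ∀ z, h z - g z - B d ≤ 0 := by
        apply mpS
        · intro z hz
          have hzU : z ∉ U := hSnotU z hz
          rw [hh z hzU, hg1 z hz]
          have : ∑ y, p z y * (h y - g y - B d)
              = ∑ y, p z y * h y - ∑ y, p z y * g y - B d * ∑ y, p z y := by
            rw [Finset.mul_sum, ← Finset.sum_sub_distrib, ← Finset.sum_sub_distrib]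
            exact Finset.sum_congr rfl fun y _ => by ring
          rw [this, hpsum z]
          ring
        · intro z hz
          have hzd : D z ≤ d := by
            simp only [hSdef, Finset.mem_filter] at hz
            push_neg at hz
            have := hz (mem_univ z)
            omega
          have := ih z hzd
          rw [hg2 z hz]
          linarith
      -- bound g x ≤ T d via the flow identity
      have hgx : g x ≤ T d := by
        -- the flow identity
        have hid : ∑ y, (∑ z ∈ univ \ S, w' z y) * g y = ∑ z ∈ S, W z := by
          have hrow : ∀ z, z ∈ S → W z * g z = W z + ∑ y, w' z y * g y := by
            intro z hz
            rw [hg1 z hz, mul_add, mul_one, Finset.mul_sum]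
            congr 1
            exact Finset.sum_congr rfl fun y _ => by rw [← mul_assoc, hWp]
          have hsum1 : ∑ z ∈ S, W z * g z
              = ∑ z ∈ S, W z + ∑ z ∈ S, ∑ y, w' z y * g y := by
            rw [← Finset.sum_add_distrib]
            exact Finset.sum_congr rfl fun z hz => hrow z hz
          have hext : ∑ z ∈ S, W z * g z = ∑ z, W z * g z := by
            apply Finset.sum_subset (Finset.subset_univ S)
            intro z _ hz
            rw [hg2 z hz, mul_zero]
          have hswap : ∑ z ∈ S, ∑ y, w' z y * g y = ∑ y, ∑ z ∈ S, w' z y * g y :=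
            Finset.sum_comm
          have hWy : ∀ y, W y * g y = ∑ z, w' z y * g y := by
            intro y
            rw [hWalt y, Finset.sum_mul]
            exact Finset.sum_congr rfl fun z _ => by rw [hw'sym]
          have hsplit : ∀ y, ∑ z, w' z y * g y
              = ∑ z ∈ univ \ S, w' z y * g y + ∑ z ∈ S, w' z y * g y :=
            fun y => (Finset.sum_sdiff (Finset.subset_univ S)).symm
          have : ∑ y, (∑ z ∈ univ \ S, w' z y * g y) = ∑ z ∈ S, W z := by
            have e1 : ∑ y, W y * g y
                = ∑ y, (∑ z ∈ univ \ S, w' z y * g y) + ∑ y, ∑ z ∈ S, w' z y * g y := by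
              rw [← Finset.sum_add_distrib]
              exact Finset.sum_congr rfl fun y _ => by rw [hWy y, hsplit y]
            rw [← hext, hsum1, hswap] at e1
            linarith
          rw [← this]
            
          exact Finset.sum_congr rfl fun y _ => by rw [Finset.sum_mul]
        -- pick the neighbor towards U
        obtain ⟨y0, hy0adj, hy0D⟩ := exists_adj_vtxDist hG hUset hxd1
        have hy0S : y0 ∈ univ \ S := by
          simp only [Finset.mem_sdiff, hSdef, Finset.mem_filter]
          refine ⟨mem_univ y0, fun hc => ?_⟩
          have e1 : D y0 = d := hy0D
          omega
        have hw'val : w' y0 x = (1-ε)^d := by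
          simp only [hw'def]
          have hmin : min (vtxDist G (U : Set V) y0) (vtxDist G (U : Set V) x) = d := by
            have e1 : vtxDist G (U : Set V) y0 = d := hy0D
            have e2 : vtxDist G (U : Set V) x = d + 1 := hxd1
            omega
          rw [if_pos hy0adj.symm, hw, edgeDist_mk, hmin]
        have hterm : w' y0 x * g x ≤ ∑ z ∈ univ \ S, w' z x * g x := by
          apply Finset.single_le_sum (fun z _ => mul_nonneg (hw'nn z x) (hg3 x)) hy0S
        have hterm2 : (∑ z ∈ univ \ S, w' z x) * g x ≤ ∑ z ∈ S, W z := by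
          rw [← hid]
          apply Finset.single_le_sum (f := fun y => (∑ z ∈ univ \ S, w' z y) * g y)
            (fun y _ => mul_nonneg (Finset.sum_nonneg fun z _ => hw'nn z y) (hg3 y))
            (mem_univ x)
        have hterm3 : (1-ε)^d * g x ≤ ∑ z ∈ S, W z := by
          rw [← hw'val]
          refine le_trans ?_ hterm2
          rw [Finset.sum_mul]
          exact le_trans (le_of_eq rfl) (by
            calc w' y0 x * g x ≤ ∑ z ∈ univ \ S, w' z x * g x := hterm
              _ = ∑ z ∈ univ \ S, w' z x * g x := rfl)
        have hpowpos : (0:ℝ) < (1-ε)^d := by positivity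
        have hTd : T d = (∑ z ∈ S, W z) / (1-ε)^d := by
          simp only [hTdef, hSdef]
          ring
        rw [hTd, le_div_iff₀ hpowpos]
        nlinarith [hterm3]
      have hfin := hcomp x
      rw [hBsucc]
      linarith
  -- conclude
  have hv : h v ≤ B (D v) := claim (D v) v le_rfl
  refine le_trans hv ?_
  -- bound B (D v)
  set q : ℕ → V → V → ℝ := fun j x y =>
    if G.Adj x y ∧ j ≤ edgeDist G (U : Set V) s(x, y) then w s(x, y) else 0 with hqdef
  have hqnn : ∀ j x y, 0 ≤ q j x y := by
    intro j x y
    simp only [hqdef]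
    split
    · exact le_of_lt (hwpos _)
    · exact le_refl 0
  have hstep1 : ∀ j, ∑ x ∈ univ.filter (fun z => j + 1 ≤ D z), W x
      ≤ ∑ x, ∑ y, q j x y := by
    intro j
    have hinner : ∀ x, j + 1 ≤ D x → W x = ∑ y, q j x y := by
      intro x hx
      rw [hWalt x]
      apply Finset.sum_congr rfl
      intro y _
      simp only [hw'def, hqdef]
      by_cases hxy : G.Adj x y
      · rw [if_pos hxy, if_pos]
        refine ⟨hxy, ?_⟩
        rw [edgeDist_mk]
        have h1 : D x ≤ D y + 1 := vtxDist_adj_le hG hUset hxy.symm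
        have : j ≤ min (vtxDist G (↑U) x) (vtxDist G (↑U) y) := by
          rw [show vtxDist G (↑U) x = D x from rfl, show vtxDist G (↑U) y = D y from rfl]
          omega
        exact this
      · rw [if_neg hxy, if_neg (fun hc => hxy hc.1)]
    calc ∑ x ∈ univ.filter (fun z => j + 1 ≤ D z), W x
        = ∑ x ∈ univ.filter (fun z => j + 1 ≤ D z), ∑ y, q j x y := by
          apply Finset.sum_congr rfl
          intro x hx
          simp only [Finset.mem_filter] at hx
          exact hinner x hx.2
      _ ≤ ∑ x, ∑ y, q j x y := by
          apply Finset.sum_le_sum_of_subset_of_nonneg (Finset.filter_subset _ _)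
          intro x _ _
          exact Finset.sum_nonneg fun y _ => hqnn j x y
  have hB : B (D v) ≤ ∑ x, ∑ y, ∑ j ∈ range (D v), ((1-ε)^j)⁻¹ * q j x y := by
    rw [hBdef]
    calc ∑ j ∈ range (D v), T j
        ≤ ∑ j ∈ range (D v), ((1-ε)^j)⁻¹ * ∑ x, ∑ y, q j x y := by
          apply Finset.sum_le_sum
          intro j _
          rw [hTdef]
          exact mul_le_mul_of_nonneg_left (hstep1 j) (by positivity)
      _ = ∑ j ∈ range (D v), ∑ x, ∑ y, ((1-ε)^j)⁻¹ * q j x y := by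
          refine Finset.sum_congr rfl fun j _ => ?_
          rw [Finset.mul_sum]
          exact Finset.sum_congr rfl fun x _ => Finset.mul_sum _ _ _
      _ = ∑ x, ∑ j ∈ range (D v), ∑ y, ((1-ε)^j)⁻¹ * q j x y := Finset.sum_comm
      _ = ∑ x, ∑ y, ∑ j ∈ range (D v), ((1-ε)^j)⁻¹ * q j x y :=
          Finset.sum_congr rfl fun x _ => Finset.sum_comm
  refine le_trans hB ?_
  have hstep3 : ∀ x y : V, ∑ j ∈ range (D v), ((1-ε)^j)⁻¹ * q j x y
      ≤ if G.Adj x y then ε⁻¹ else 0 := by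
    intro x y
    by_cases hxy : G.Adj x y
    · rw [if_pos hxy]
      set k := edgeDist G (U : Set V) s(x, y) with hkdef
      have hq : ∀ j, ((1-ε)^j)⁻¹ * q j x y
          = if j ≤ k then ((1-ε)^j)⁻¹ * (1-ε)^k else 0 := by
        intro j
        simp only [hqdef]
        by_cases hj : j ≤ k
        · rw [if_pos ⟨hxy, hj⟩, if_pos hj, hw]
        · rw [if_neg (fun hc => hj hc.2), if_neg hj, mul_zero]
      calc ∑ j ∈ range (D v), ((1-ε)^j)⁻¹ * q j x y
          = ∑ j ∈ range (D v), (if j ≤ k then ((1-ε)^j)⁻¹ * (1-ε)^k else 0) :=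
            Finset.sum_congr rfl fun j _ => hq j
        _ ≤ ε⁻¹ := geom_aux hε0 hε1 k (D v)
    · rw [if_neg hxy]
      apply le_of_eq
      apply Finset.sum_eq_zero
      intro j _
      have : q j x y = 0 := by
        simp only [hqdef]
        rw [if_neg (fun hc => hxy hc.1)]
      rw [this, mul_zero]
  have hstep4 : ∑ x, ∑ y, (if G.Adj x y then (ε⁻¹:ℝ) else 0)
      = 2 * ε⁻¹ * (G.edgeFinset.card : ℝ) := by
    have hdeg : ∀ x : V, ∑ y, (if G.Adj x y then (ε⁻¹:ℝ) else 0)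
        = (G.degree x : ℝ) * ε⁻¹ := by
      intro x
      rw [← Finset.sum_filter, ← SimpleGraph.neighborFinset_eq_filter,
        Finset.sum_const, SimpleGraph.degree]
      simp [nsmul_eq_mul]
    rw [Finset.sum_congr rfl fun x _ => hdeg x, ← Finset.sum_mul]
    have hcast : ∑ x, (G.degree x : ℝ) = ((∑ x, G.degree x : ℕ) : ℝ) := by push_cast; rfl
    rw [hcast, SimpleGraph.sum_degrees_eq_twice_card_edges]
    push_cast
    ring
  refine le_trans ?_ (le_of_eq hstep4)
  exact Finset.sum_le_sum fun x _ => Finset.sum_le_sum fun y _ => hstep3 x y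
end

section
/- Let G be a graph with maximum degree Δ, let k be a positive integer, and let V_i be a vertex subset such that the induced subgraph of the k-th power graph G^k on V_i is connected with radius at most r. Let W_i = {w : dist_G(w, V_i) ≤ k/2}. Then any two vertices u, v in W_i are connected by a walk of length at most (2r+1)k lying entirely within W_i. -/
open scoped Classical

/-- The `k`-th power of `G`: distinct vertices are adjacent iff their `G`-distance is at
most `k` (and they are connected in `G`). -/
def powGraph {V : Type*} (G : SimpleGraph V) (k : ℕ) : SimpleGraph V where
  Adj a b := a ≠ b ∧ G.Reachable a b ∧ G.dist a b ≤ k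
  symm := by
    constructor
    rintro a b ⟨hne, hre, hd⟩
    exact ⟨hne.symm, hre.symm, by rwa [SimpleGraph.dist_comm]⟩
  loopless := by constructor; rintro a ⟨hne, -⟩; exact hne rfl

/-- Every vertex on a walk of length at most `k` between two vertices of `Vi`
is within `G`-distance `k/2` of `Vi`. -/
lemma support_subset_Wi {V : Type*} (G : SimpleGraph V) (k : ℕ)
    (Vi : Finset V) (Wi : Set V)
    (hW : Wi = {w : V | ∃ x ∈ Vi, 2 * G.dist w x ≤ k})
    {a b : V} (ha : a ∈ Vi) (hb : b ∈ Vi)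
    (p : G.Walk a b) (hp : p.length ≤ k) : ∀ x ∈ p.support, x ∈ Wi := by
  intro x hx
  have h1 : G.dist x a ≤ (p.takeUntil x hx).length := by
    rw [G.dist_comm]; exact SimpleGraph.dist_le _
  have h2 : G.dist x b ≤ (p.dropUntil x hx).length := SimpleGraph.dist_le _
  have hsum : (p.takeUntil x hx).length + (p.dropUntil x hx).length = p.length := by
    rw [← SimpleGraph.Walk.length_append, p.take_spec hx]
  rw [hW]
  rcases le_total (G.dist x a) (G.dist x b) with h | h
  · exact ⟨a, ha, by omega⟩
  · exact ⟨b, hb, by omega⟩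

/-- A walk in the induced power graph lifts to a `G`-walk of length at most `k`
times as long, staying within `Wi`. -/
lemma lift_walk {V : Type*} (G : SimpleGraph V) (k : ℕ) (hk : 1 ≤ k)
    (Vi : Finset V) (Wi : Set V)
    (hW : Wi = {w : V | ∃ x ∈ Vi, 2 * G.dist w x ≤ k}) :
    ∀ {a b : ((Vi : Set V))} (q : ((powGraph G k).induce (Vi : Set V)).Walk a b),
      ∃ p : G.Walk (a : V) (b : V), p.length ≤ q.length * k ∧
        ∀ x ∈ p.support, x ∈ Wi := by
  intro a b q
  induction q with
  | nil =>
    rename_i w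
    refine ⟨SimpleGraph.Walk.nil, by simp, ?_⟩
    intro x hx
    simp only [SimpleGraph.Walk.support_nil, List.mem_singleton] at hx
    subst hx
    rw [hW]
    exact ⟨w, w.2, by rw [SimpleGraph.dist_self]; omega⟩
  | @cons a c b h q ih =>
    obtain ⟨hne, hre, hd⟩ : (powGraph G k).Adj (a : V) (c : V) := id h
    obtain ⟨w, hw⟩ := hre.exists_walk_length_eq_dist
    obtain ⟨p, hpl, hps⟩ := ih
    refine ⟨w.append p, ?_, ?_⟩
    · rw [SimpleGraph.Walk.length_append, SimpleGraph.Walk.length_cons]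
      have : w.length ≤ k := by omega
      calc w.length + p.length ≤ k + q.length * k := by omega
        _ = (q.length + 1) * k := by ring
    · intro x hx
      rw [SimpleGraph.Walk.mem_support_append_iff] at hx
      rcases hx with hx | hx
      · exact support_subset_Wi G k Vi Wi hW a.2 c.2 w (by omega) x hx
      · exact hps x hx

/-- A shortest walk from `u ∈ Wi` to its witness `x ∈ Vi` stays within `Wi`. -/
lemma stem_walk {V : Type*} (G : SimpleGraph V) (hG : G.Connected) (k : ℕ)
    (Vi : Finset V) (Wi : Set V)
    (hW : Wi = {w : V | ∃ x ∈ Vi, 2 * G.dist w x ≤ k})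
    {u x : V} (hx : x ∈ Vi) (hd : 2 * G.dist u x ≤ k) :
    ∃ p : G.Walk u x, 2 * p.length ≤ k ∧ ∀ y ∈ p.support, y ∈ Wi := by
  obtain ⟨p, hp⟩ := (hG u x).exists_walk_length_eq_dist
  refine ⟨p, by omega, ?_⟩
  intro y hy
  have h2 : G.dist y x ≤ (p.dropUntil y hy).length := SimpleGraph.dist_le _
  have hsum : (p.takeUntil y hy).length + (p.dropUntil y hy).length = p.length := by
    rw [← SimpleGraph.Walk.length_append, p.take_spec hy]
  rw [hW]
  exact ⟨x, hx, by omega⟩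

theorem stmt10 {V : Type*} [Fintype V] (G : SimpleGraph V) [DecidableRel G.Adj]
    (hG : G.Connected) (Δ : ℕ) (hΔ : ∀ v, G.degree v ≤ Δ)
    (k : ℕ) (hk : 1 ≤ k) (r : ℕ)
    (Vi : Finset V)
    (hrad : ∃ c : ((Vi : Set V)), ∀ u : ((Vi : Set V)),
      ((powGraph G k).induce (Vi : Set V)).Reachable c u ∧
      ((powGraph G k).induce (Vi : Set V)).dist c u ≤ r)
    (Wi : Set V) (hW : Wi = {w : V | ∃ x ∈ Vi, 2 * G.dist w x ≤ k}) :
    ∀ u ∈ Wi, ∀ v ∈ Wi, ∃ p : G.Walk u v,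
      p.length ≤ (2 * r + 1) * k ∧ ∀ x ∈ p.support, x ∈ Wi := by
  intro u hu v hv
  obtain ⟨c, hc⟩ := hrad
  obtain ⟨x, hxVi, hxd⟩ : ∃ x ∈ Vi, 2 * G.dist u x ≤ k := by rwa [hW] at hu
  obtain ⟨y, hyVi, hyd⟩ : ∃ y ∈ Vi, 2 * G.dist v y ≤ k := by rwa [hW] at hv
  obtain ⟨hre1, hd1⟩ := hc ⟨x, hxVi⟩
  obtain ⟨hre2, hd2⟩ := hc ⟨y, hyVi⟩
  obtain ⟨q1, hq1⟩ := hre1.exists_walk_length_eq_dist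
  obtain ⟨q2, hq2⟩ := hre2.exists_walk_length_eq_dist
  -- lift q1.reverse : walk from ⟨x⟩ to c, and q2 : walk from c to ⟨y⟩
  obtain ⟨p1, hp1l, hp1s⟩ := lift_walk G k hk Vi Wi hW q1.reverse
  obtain ⟨p2, hp2l, hp2s⟩ := lift_walk G k hk Vi Wi hW q2
  obtain ⟨pu, hpul, hpus⟩ := stem_walk G hG k Vi Wi hW hxVi hxd
  obtain ⟨pv, hpvl, hpvs⟩ := stem_walk G hG k Vi Wi hW hyVi hyd
  refine ⟨pu.append ((p1.append p2).append pv.reverse), ?_, ?_⟩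
  · have hq1l : q1.reverse.length ≤ r := by
      rw [SimpleGraph.Walk.length_reverse]; omega
    have hq2l : q2.length ≤ r := by omega
    have h1 : p1.length ≤ r * k := le_trans hp1l (Nat.mul_le_mul_right k hq1l)
    have h2 : p2.length ≤ r * k := le_trans hp2l (Nat.mul_le_mul_right k hq2l)
    simp only [SimpleGraph.Walk.length_append, SimpleGraph.Walk.length_reverse]
    have : (2 * r + 1) * k = r * k + r * k + k := by ring
    omega
  · intro z hz
    simp only [SimpleGraph.Walk.mem_support_append_iff,
      SimpleGraph.Walk.support_reverse, List.mem_reverse] at hz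
    rcases hz with hz | (hz | hz) | hz
    · exact hpus z hz
    · exact hp1s z hz
    · exact hp2s z hz
    · exact hpvs z hz
end

section
/- With Γ', H', and s_v as in the two-coordinate affine group setting, let b, c, d ∈ Q = {(0,0),(0,1),(1,0)} ⊆ 𝔽_p², and choose a ∈ Q such that either (c = d and a ≠ b) or (c ≠ d and b − a, d − c are linearly independent over 𝔽_p). Then the cosets H' s_a^{-1} y for distinct y ∈ s_b H' s_c^{-1} s_d H' are pairwise disjoint. Moreover, such a choice of a ∈ Q always exists since no line through the origin in 𝔽_p² contains all three vectors of Q − Q differences used. -/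
/-- The group `Γ' = {(λ, u) : λ ∈ 𝔽_p^×, u ∈ 𝔽_p²}` of pairs of affine maps of equal
slope, with multiplication `(λ,u)(μ,v) = (λμ, u + λv)`. -/
def amul (p : ℕ) (g h : (ZMod p)ˣ × (ZMod p × ZMod p)) : (ZMod p)ˣ × (ZMod p × ZMod p) :=
  (g.1 * h.1, (g.2.1 + (g.1 : ZMod p) * h.2.1, g.2.2 + (g.1 : ZMod p) * h.2.2))

/-- The translation pair `s_v = (1, v)`. -/
def sTr (p : ℕ) (v : ZMod p × ZMod p) : (ZMod p)ˣ × (ZMod p × ZMod p) := (1, v)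

/-- The inverse `s_v⁻¹ = (1, −v)`. -/
def sTrInv (p : ℕ) (v : ZMod p × ZMod p) : (ZMod p)ˣ × (ZMod p × ZMod p) := (1, -v)

lemma indep_of_det (p : ℕ) [Fact p.Prime] (u v : ZMod p × ZMod p)
    (h : u.1 * v.2 - u.2 * v.1 ≠ 0) : LinearIndependent (ZMod p) ![u, v] := by
  rw [LinearIndependent.pair_iff]
  intro s t hst
  rw [Prod.ext_iff] at hst
  simp only [Prod.fst_add, Prod.snd_add, Prod.smul_fst, Prod.smul_snd, smul_eq_mul,
    Prod.fst_zero, Prod.snd_zero] at hst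
  obtain ⟨h1, h2⟩ := hst
  constructor
  · have hs : s * (u.1 * v.2 - u.2 * v.1) = 0 := by linear_combination v.2 * h1 - v.1 * h2
    exact (mul_eq_zero.mp hs).resolve_right h
  · have ht : t * (u.1 * v.2 - u.2 * v.1) = 0 := by linear_combination -u.2 * h1 + u.1 * h2
    exact (mul_eq_zero.mp ht).resolve_right h

lemma amul_form (p : ℕ) (b c d : ZMod p × ZMod p) (l m : (ZMod p)ˣ) :
    amul p (amul p (amul p (amul p (sTr p b) ((l, 0) : (ZMod p)ˣ × (ZMod p × ZMod p)))
        (sTrInv p c)) (sTr p d)) ((m, 0) : (ZMod p)ˣ × (ZMod p × ZMod p))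
      = (l * m, (b.1 + (l : ZMod p) * (d.1 - c.1), b.2 + (l : ZMod p) * (d.2 - c.2))) := by
  simp only [amul, sTr, sTrInv, Prod.fst, Prod.snd, Units.val_mul, Units.val_one,
    Prod.fst_zero, Prod.snd_zero, Prod.fst_neg, Prod.snd_neg, Prod.mk.injEq]
  refine ⟨by group, ?_, ?_⟩ <;> ring

lemma amul_form2 (p : ℕ) (a u : ZMod p × ZMod p) (ν π : (ZMod p)ˣ) :
    amul p (amul p ((ν, 0) : (ZMod p)ˣ × (ZMod p × ZMod p)) (sTrInv p a)) (π, u)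
      = (ν * π, ((ν : ZMod p) * (u.1 - a.1), (ν : ZMod p) * (u.2 - a.2))) := by
  simp only [amul, sTr, sTrInv, Prod.fst, Prod.snd, Units.val_mul, Units.val_one,
    Prod.fst_zero, Prod.snd_zero, Prod.fst_neg, Prod.snd_neg, Prod.mk.injEq]
  refine ⟨by group, ?_, ?_⟩ <;> ring

lemma core_lemma (p : ℕ) [Fact p.Prime] (a b c d : ZMod p × ZMod p)
    (hchoice : (c = d ∧ a ≠ b) ∨ (c ≠ d ∧ LinearIndependent (ZMod p) ![b - a, d - c]))
    (ν ν' l l' : ZMod p) (hν : ν ≠ 0)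
    (h1 : ν * (b.1 + l * (d.1 - c.1) - a.1) = ν' * (b.1 + l' * (d.1 - c.1) - a.1))
    (h2 : ν * (b.2 + l * (d.2 - c.2) - a.2) = ν' * (b.2 + l' * (d.2 - c.2) - a.2)) :
    ν = ν' ∧ l * (d.1 - c.1) = l' * (d.1 - c.1) ∧ l * (d.2 - c.2) = l' * (d.2 - c.2) := by
  have key : (ν - ν') • (b - a) + (ν * l - ν' * l') • (d - c) = (0 : ZMod p × ZMod p) := by
    rw [Prod.ext_iff]
    simp only [Prod.fst_add, Prod.snd_add, Prod.smul_fst, Prod.smul_snd, smul_eq_mul,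
      Prod.fst_sub, Prod.snd_sub, Prod.fst_zero, Prod.snd_zero]
    exact ⟨by linear_combination h1, by linear_combination h2⟩
  have hnn : ν = ν' := by
    rcases hchoice with ⟨rfl, hab⟩ | ⟨_, hli⟩
    · rw [sub_self, smul_zero, add_zero, smul_eq_zero] at key
      rcases key with h | h
      · exact sub_eq_zero.mp h
      · exact absurd (sub_eq_zero.mp h).symm hab
    · exact sub_eq_zero.mp (LinearIndependent.pair_iff.mp hli _ _ key).1
  refine ⟨hnn, ?_, ?_⟩
  · rw [← hnn] at h1
    have := mul_left_cancel₀ hν h1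
    linear_combination this
  · rw [← hnn] at h2
    have := mul_left_cancel₀ hν h2
    linear_combination this

theorem stmt14 (p : ℕ) [Fact p.Prime]
    (H' : Set ((ZMod p)ˣ × (ZMod p × ZMod p))) (hH' : H' = {g | g.2 = 0})
    (Q : Set (ZMod p × ZMod p)) (hQ : Q = {(0, 0), (0, 1), (1, 0)})
    (a b c d : ZMod p × ZMod p) (ha : a ∈ Q) (hb : b ∈ Q) (hc : c ∈ Q) (hd : d ∈ Q)
    (hchoice : (c = d ∧ a ≠ b) ∨
      (c ≠ d ∧ LinearIndependent (ZMod p) ![b - a, d - c])) :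
    (∀ y ∈ {y | ∃ h₁ ∈ H', ∃ h₂ ∈ H',
        y = amul p (amul p (amul p (amul p (sTr p b) h₁) (sTrInv p c)) (sTr p d)) h₂},
      ∀ y' ∈ {y | ∃ h₁ ∈ H', ∃ h₂ ∈ H',
        y = amul p (amul p (amul p (amul p (sTr p b) h₁) (sTrInv p c)) (sTr p d)) h₂},
      y ≠ y' →
      Disjoint ((fun h => amul p (amul p h (sTrInv p a)) y) '' H')
        ((fun h => amul p (amul p h (sTrInv p a)) y') '' H')) ∧
    (∀ b' ∈ Q, ∀ c' ∈ Q, ∀ d' ∈ Q, ∃ a' ∈ Q,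
      (c' = d' ∧ a' ≠ b') ∨
      (c' ≠ d' ∧ LinearIndependent (ZMod p) ![b' - a', d' - c'])) := by
  constructor
  · subst hH'
    rintro y hy y' hy' hne
    simp only [Set.mem_setOf_eq] at hy hy'
    obtain ⟨⟨l, w⟩, hw, ⟨m, w₂⟩, hw₂, rfl⟩ := hy
    obtain ⟨⟨l', w'⟩, hw', ⟨m', w₂'⟩, hw₂', rfl⟩ := hy'
    simp only [Set.mem_setOf_eq] at hw hw₂ hw' hw₂'
    subst hw hw₂ hw' hw₂'
    rw [Set.disjoint_left]
    rintro z ⟨⟨ν, v⟩, hg, rfl⟩ ⟨⟨ν', v'⟩, hg', hzz⟩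
    simp only [Set.mem_setOf_eq] at hg hg'
    subst hg hg'
    apply hne
    rw [amul_form, amul_form] at hzz ⊢
    simp only [amul_form2, Prod.mk.injEq] at hzz
    obtain ⟨hu, hv1, hv2⟩ := hzz
    obtain ⟨hnn, he1, he2⟩ := core_lemma p a b c d hchoice (ν' : ZMod p) (ν : ZMod p)
      (l' : ZMod p) (l : ZMod p) ν'.ne_zero (by linear_combination hv1) (by linear_combination hv2)
    have hν : ν' = ν := Units.ext hnn
    subst hν
    have hlm : l' * m' = l * m := mul_left_cancel hu
    rw [Prod.ext_iff]
    refine ⟨hlm.symm, ?_⟩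
    rw [Prod.ext_iff]
    exact ⟨by rw [he1], by rw [he2]⟩
  · subst hQ
    rintro b' hb' c' hc' d' hd'
    simp only [Set.mem_insert_iff, Set.mem_singleton_iff] at hb' hc' hd' ⊢
    rcases hb' with rfl | rfl | rfl <;> rcases hc' with rfl | rfl | rfl <;>
      rcases hd' with rfl | rfl | rfl
    · exact ⟨(0, 1), Or.inr (Or.inl rfl), Or.inl ⟨rfl, by simp [Prod.ext_iff]⟩⟩
    · exact ⟨(1, 0), Or.inr (Or.inr rfl), Or.inr ⟨by simp [Prod.ext_iff], indep_of_det p _ _ (by simp [Prod.ext_iff])⟩⟩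
    · exact ⟨(0, 1), Or.inr (Or.inl rfl), Or.inr ⟨by simp [Prod.ext_iff], indep_of_det p _ _ (by simp [Prod.ext_iff])⟩⟩
    · exact ⟨(1, 0), Or.inr (Or.inr rfl), Or.inr ⟨by simp [Prod.ext_iff], indep_of_det p _ _ (by simp [Prod.ext_iff])⟩⟩
    · exact ⟨(0, 1), Or.inr (Or.inl rfl), Or.inl ⟨rfl, by simp [Prod.ext_iff]⟩⟩
    · exact ⟨(0, 1), Or.inr (Or.inl rfl), Or.inr ⟨by simp [Prod.ext_iff], indep_of_det p _ _ (by simp [Prod.ext_iff])⟩⟩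
    · exact ⟨(0, 1), Or.inr (Or.inl rfl), Or.inr ⟨by simp [Prod.ext_iff], indep_of_det p _ _ (by simp [Prod.ext_iff])⟩⟩
    · exact ⟨(0, 1), Or.inr (Or.inl rfl), Or.inr ⟨by simp [Prod.ext_iff], indep_of_det p _ _ (by simp [Prod.ext_iff])⟩⟩
    · exact ⟨(0, 1), Or.inr (Or.inl rfl), Or.inl ⟨rfl, by simp [Prod.ext_iff]⟩⟩
    · exact ⟨(0, 0), Or.inl rfl, Or.inl ⟨rfl, by simp [Prod.ext_iff]⟩⟩
    · exact ⟨(1, 0), Or.inr (Or.inr rfl), Or.inr ⟨by simp [Prod.ext_iff], indep_of_det p _ _ (by simp [Prod.ext_iff])⟩⟩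
    · exact ⟨(0, 0), Or.inl rfl, Or.inr ⟨by simp [Prod.ext_iff], indep_of_det p _ _ (by simp [Prod.ext_iff])⟩⟩
    · exact ⟨(1, 0), Or.inr (Or.inr rfl), Or.inr ⟨by simp [Prod.ext_iff], indep_of_det p _ _ (by simp [Prod.ext_iff])⟩⟩
    · exact ⟨(0, 0), Or.inl rfl, Or.inl ⟨rfl, by simp [Prod.ext_iff]⟩⟩
    · exact ⟨(0, 0), Or.inl rfl, Or.inr ⟨by simp [Prod.ext_iff], indep_of_det p _ _ (by simp [Prod.ext_iff])⟩⟩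
    · exact ⟨(0, 0), Or.inl rfl, Or.inr ⟨by simp [Prod.ext_iff], indep_of_det p _ _ (by simp [Prod.ext_iff])⟩⟩
    · exact ⟨(0, 0), Or.inl rfl, Or.inr ⟨by simp [Prod.ext_iff], indep_of_det p _ _ (by simp [Prod.ext_iff])⟩⟩
    · exact ⟨(0, 0), Or.inl rfl, Or.inl ⟨rfl, by simp [Prod.ext_iff]⟩⟩
    · exact ⟨(0, 0), Or.inl rfl, Or.inl ⟨rfl, by simp [Prod.ext_iff]⟩⟩
    · exact ⟨(0, 0), Or.inl rfl, Or.inr ⟨by simp [Prod.ext_iff], indep_of_det p _ _ (by simp [Prod.ext_iff])⟩⟩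
    · exact ⟨(0, 1), Or.inr (Or.inl rfl), Or.inr ⟨by simp [Prod.ext_iff], indep_of_det p _ _ (by simp [Prod.ext_iff])⟩⟩
    · exact ⟨(0, 0), Or.inl rfl, Or.inr ⟨by simp [Prod.ext_iff], indep_of_det p _ _ (by simp [Prod.ext_iff])⟩⟩
    · exact ⟨(0, 0), Or.inl rfl, Or.inl ⟨rfl, by simp [Prod.ext_iff]⟩⟩
    · exact ⟨(0, 0), Or.inl rfl, Or.inr ⟨by simp [Prod.ext_iff], indep_of_det p _ _ (by simp [Prod.ext_iff])⟩⟩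
    · exact ⟨(0, 1), Or.inr (Or.inl rfl), Or.inr ⟨by simp [Prod.ext_iff], indep_of_det p _ _ (by simp [Prod.ext_iff])⟩⟩
    · exact ⟨(0, 0), Or.inl rfl, Or.inr ⟨by simp [Prod.ext_iff], indep_of_det p _ _ (by simp [Prod.ext_iff])⟩⟩
    · exact ⟨(0, 0), Or.inl rfl, Or.inl ⟨rfl, by simp [Prod.ext_iff]⟩⟩
end

section
/- Let G be a finite connected bipartite graph with parts X and Y, each a copy of the affine group Γ = AGL(1,p) for p prime, where f ∈ X is adjacent to g ∈ Y iff g = s h f for some s ∈ {id, x↦x+1} and h ∈ H (the homothety subgroup). If V ⊆ V(G) is contained in the closed ball of radius 2 around some vertex f ∈ X, then |N^+(V)| ≥ ((p−1)/2)·|V ∩ Y|. -/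
open scoped Classical

def amul1 (p : ℕ) (g h : (ZMod p)ˣ × ZMod p) : (ZMod p)ˣ × ZMod p :=
  (g.1 * h.1, g.2 + (g.1 : ZMod p) * h.2)

def cayley (p : ℕ) : SimpleGraph (((ZMod p)ˣ × ZMod p) ⊕ ((ZMod p)ˣ × ZMod p)) :=
  SimpleGraph.fromRel fun x y =>
    ∃ (f : (ZMod p)ˣ × ZMod p) (c : ZMod p) (l : (ZMod p)ˣ),
      (c = 0 ∨ c = 1) ∧ x = Sum.inl f ∧
      y = Sum.inr (amul1 p (amul1 p (1, c) (l, 0)) f)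

noncomputable def closedNbhd {V : Type*} [Fintype V] (G : SimpleGraph V) (s : Finset V) :
    Finset V :=
  s ∪ Finset.univ.filter fun u => ∃ x ∈ s, G.Adj x u

section helpers
variable (p : ℕ) [Fact p.Prime]

lemma cayley_adj_inl {f : (ZMod p)ˣ × ZMod p}
    {v : ((ZMod p)ˣ × ZMod p) ⊕ ((ZMod p)ˣ × ZMod p)}
    (h : (cayley p).Adj (Sum.inl f) v) : ∃ a, v = Sum.inr a := by
  rw [cayley, SimpleGraph.fromRel_adj] at h
  rcases h.2 with ⟨f0, c, l, _, h1, h2⟩ | ⟨f0, c, l, _, h1, h2⟩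
  · exact ⟨_, h2⟩
  · exact absurd h2 (by simp)

lemma cayley_adj_inr {g : (ZMod p)ˣ × ZMod p}
    {v : ((ZMod p)ˣ × ZMod p) ⊕ ((ZMod p)ˣ × ZMod p)}
    (h : (cayley p).Adj (Sum.inr g) v) : ∃ a, v = Sum.inl a := by
  rw [cayley, SimpleGraph.fromRel_adj] at h
  rcases h.2 with ⟨f0, c, l, _, h1, h2⟩ | ⟨f0, c, l, _, h1, h2⟩
  · exact absurd h1 (by simp)
  · exact ⟨_, h1⟩

lemma walk_adj {f g : (ZMod p)ˣ × ZMod p}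
    (w : (cayley p).Walk (Sum.inl f) (Sum.inr g)) (hw : w.length ≤ 2) :
    (cayley p).Adj (Sum.inl f) (Sum.inr g) := by
  cases w with
  | cons h w' =>
    cases w' with
    | nil => exact h
    | cons h' w'' =>
      exfalso
      obtain ⟨a, rfl⟩ := cayley_adj_inl p h
      obtain ⟨b, rfl⟩ := cayley_adj_inr p h'
      simp only [SimpleGraph.Walk.length_cons] at hw
      have h0 : w''.length = 0 := by omega
      have := w''.eq_of_length_eq_zero h0
      simp at this

lemma cayley_adj_form {f g : (ZMod p)ˣ × ZMod p}
    (h : (cayley p).Adj (Sum.inl f) (Sum.inr g)) :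
    ∃ (c : ZMod p) (l : (ZMod p)ˣ), (c = 0 ∨ c = 1) ∧
      g = (l * f.1, c + (l : ZMod p) * f.2) := by
  rw [cayley, SimpleGraph.fromRel_adj] at h
  rcases h.2 with ⟨f0, c, l, hc, h1, h2⟩ | ⟨f0, c, l, hc, h1, h2⟩
  · refine ⟨c, l, hc, ?_⟩
    simp only [Sum.inl.injEq] at h1
    simp only [Sum.inr.injEq] at h2
    subst h1
    rw [h2]
    simp [amul1]
  · exact absurd h1 (by simp)

end helpers

theorem stmt15 (p : ℕ) [Fact p.Prime]
    (f : (ZMod p)ˣ × ZMod p)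
    (Vset : Finset (((ZMod p)ˣ × ZMod p) ⊕ ((ZMod p)ˣ × ZMod p)))
    (hball : ∀ v ∈ Vset, ∃ w : (cayley p).Walk (Sum.inl f) v, w.length ≤ 2) :
    ((p : ℝ) - 1) / 2 * ((Vset.filter fun x => x.isRight).card : ℝ) ≤
      ((closedNbhd (cayley p) Vset).card : ℝ) := by
  classical
  set S : Finset ((ZMod p)ˣ × ZMod p) :=
    (Vset.filter fun x => x.isRight).image (Sum.elim id id) with hSdef
  have hcardS : (Vset.filter fun x => x.isRight).card = S.card := by
    rw [hSdef]
    refine (Finset.card_image_of_injOn ?_).symm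
    intro x hx y hy hxy
    simp only [Finset.coe_filter, Set.mem_setOf_eq] at hx hy
    rcases x with a | a <;> rcases y with b | b <;> simp_all
  have hmemS : ∀ g ∈ S, Sum.inr g ∈ Vset := by
    intro g hg
    rw [hSdef, Finset.mem_image] at hg
    obtain ⟨v, hv, rfl⟩ := hg
    rw [Finset.mem_filter] at hv
    rcases v with a | a
    · simp at hv
    · simpa using hv.1
  have hform : ∀ g ∈ S, ∃ (c : ZMod p) (l : (ZMod p)ˣ), (c = 0 ∨ c = 1) ∧
      g = (l * f.1, c + (l : ZMod p) * f.2) := by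
    intro g hg
    obtain ⟨w, hw⟩ := hball _ (hmemS g hg)
    exact cayley_adj_form p (walk_adj p w hw)
  set φ : (ZMod p)ˣ × ZMod p → ZMod p :=
    fun g => (↑(g.1⁻¹) : ZMod p) * (2 * g.2 - 1 - (↑(g.1 * f.1⁻¹) : ZMod p) * f.2) with hφdef
  have hφval : ∀ (c : ZMod p) (l : (ZMod p)ˣ),
      φ (l * f.1, c + (l : ZMod p) * f.2) * ((l : ZMod p) * (f.1 : ZMod p))
        = 2 * c - 1 + (l : ZMod p) * f.2 := by
    intro c l
    have hl : (l : ZMod p) ≠ 0 := l.ne_zero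
    have hf1 : ((f.1 : ZMod p)) ≠ 0 := f.1.ne_zero
    simp only [hφdef, mul_inv_rev, mul_inv_cancel_right]
    push_cast [Units.val_inv_eq_inv_val]
    field_simp
    ring
  set T : Finset (ZMod p) := S.image φ with hTdef
  -- |S| ≤ 2 |T|
  have hST : S.card ≤ 2 * T.card := by
    have hinj : Set.InjOn (fun g => (φ g, g.2 - (↑(g.1 * f.1⁻¹) : ZMod p) * f.2)) S := by
      intro g hg g' hg' h
      obtain ⟨c, l, hc, rfl⟩ := hform g hg
      obtain ⟨c', l', hc', rfl⟩ := hform g' hg'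
      simp only [Prod.mk.injEq] at h ⊢
      have hcfix : ∀ (c0 : ZMod p) (l0 : (ZMod p)ˣ),
          ((c0 + (l0 : ZMod p) * f.2) - (↑((l0 * f.1) * f.1⁻¹) : ZMod p) * f.2) = c0 := by
        intro c0 l0
        rw [mul_inv_cancel_right]
        ring
      rw [hcfix, hcfix] at h
      obtain ⟨hφeq, rfl⟩ := h
      have e1 := hφval c l
      have e2 := hφval c l'
      rw [hφeq] at e1
      -- (l - l') * (stuff) analysis
      have key : ((l : ZMod p) - (l' : ZMod p)) *
          (φ (l' * f.1, c + (l' : ZMod p) * f.2) * (f.1 : ZMod p) - f.2) = 0 := by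
        linear_combination e1 - e2
      have h2c : (2 * c - 1 : ZMod p) ≠ 0 := by
        rcases hc with rfl | rfl
        · simpa using (neg_ne_zero.mpr (one_ne_zero : (1 : ZMod p) ≠ 0))
        · norm_num
      rcases mul_eq_zero.mp key with h0 | h0
      · have : l = l' := Units.ext (sub_eq_zero.mp h0)
        subst this
        exact ⟨rfl, rfl⟩
      · exfalso
        apply h2c
        have hb : φ (l' * f.1, c + (l' : ZMod p) * f.2) * (f.1 : ZMod p) = f.2 :=
          sub_eq_zero.mp h0
        linear_combination (l' : ZMod p) * hb - e2
    calc S.card ≤ (T ×ˢ ({0, 1} : Finset (ZMod p))).card := by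
          apply Finset.card_le_card_of_injOn
            (fun g => (φ g, g.2 - (↑(g.1 * f.1⁻¹) : ZMod p) * f.2))
          · intro g hg
            rw [Finset.mem_coe, Finset.mem_product]
            constructor
            · exact Finset.mem_image_of_mem φ hg
            · obtain ⟨c, l, hc, rfl⟩ := hform g hg
              have : ((c + (l : ZMod p) * f.2) - (↑((l * f.1) * f.1⁻¹) : ZMod p) * f.2) = c := by
                rw [mul_inv_cancel_right]; ring
              dsimp only
              rw [this]
              simpa using hc
          · exact hinj
      _ ≤ 2 * T.card := by
          rw [Finset.card_product]
          have : ({0, 1} : Finset (ZMod p)).card ≤ 2 := by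
            apply le_trans (Finset.card_insert_le _ _)
            simp
          calc T.card * ({0, 1} : Finset (ZMod p)).card ≤ T.card * 2 :=
                Nat.mul_le_mul_left _ this
            _ = 2 * T.card := mul_comm _ _
  -- (p-1) * |T| ≤ |closedNbhd|
  have hTN : Fintype.card (ZMod p)ˣ * T.card ≤ (closedNbhd (cayley p) Vset).card := by
    rw [← Finset.card_univ, ← Finset.card_product]
    apply Finset.card_le_card_of_injOn
      (fun q : (ZMod p)ˣ × ZMod p => (Sum.inl (q.1, (q.1 : ZMod p) * q.2) :
        ((ZMod p)ˣ × ZMod p) ⊕ ((ZMod p)ˣ × ZMod p)))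
    · rintro ⟨μ, t⟩ hq
      rw [Finset.mem_coe, Finset.mem_product] at hq
      obtain ⟨-, ht⟩ := hq
      simp only [hTdef, Finset.mem_image] at ht
      obtain ⟨g, hg, rfl⟩ := ht
      obtain ⟨c, l, hc, rfl⟩ := hform g hg
      simp only [Finset.mem_coe, closedNbhd, Finset.mem_union, Finset.mem_filter, Finset.mem_univ, true_and]
      right
      refine ⟨Sum.inr _, hmemS _ hg, ?_⟩
      rw [cayley, SimpleGraph.fromRel_adj]
      constructor
      · simp
      · right
        refine ⟨(μ, (μ : ZMod p) * φ (l * f.1, c + (l : ZMod p) * f.2)),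
          1 - c, l * f.1 * μ⁻¹, ?_, rfl, ?_⟩
        · rcases hc with rfl | rfl
          · right; ring
          · left; ring
        · simp only [Sum.inr.injEq, amul1, Prod.mk.injEq]
          constructor
          · rw [one_mul, inv_mul_cancel_right]
          · have e1 := hφval c l
            generalize ht : φ (l * f.1, c + (l : ZMod p) * f.2) = t at e1 ⊢
            have hμ : ((μ : ZMod p))⁻¹ * (μ : ZMod p) = 1 :=
              inv_mul_cancel₀ μ.ne_zero
            simp only [Units.val_mul, Units.val_one, Units.val_inv_eq_inv_val]
            linear_combination (-1 : ZMod p) * e1 -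
              ((l : ZMod p) * (f.1 : ZMod p) * t) * hμ
    · rintro ⟨μ, t⟩ - ⟨μ', t'⟩ - h
      simp only [Sum.inl.injEq, Prod.mk.injEq] at h
      obtain ⟨h1, h2⟩ := h
      subst h1
      have : t = t' := by
        have hμ : (μ : ZMod p) ≠ 0 := μ.ne_zero
        exact mul_left_cancel₀ hμ h2
      rw [this]
  have hpu : Fintype.card (ZMod p)ˣ = p - 1 := ZMod.card_units p
  have hp1 : 1 ≤ p := (Fact.out : p.Prime).one_lt.le
  rw [hcardS]
  have hcast : ((p : ℝ) - 1) = ((p - 1 : ℕ) : ℝ) := by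
    rw [Nat.cast_sub hp1]; norm_num
  rw [hcast]
  calc ((p - 1 : ℕ) : ℝ) / 2 * S.card ≤ ((p - 1 : ℕ) : ℝ) / 2 * (2 * T.card) := by
        apply mul_le_mul_of_nonneg_left
        · exact_mod_cast hST
        · positivity
    _ = ((p - 1 : ℕ) : ℝ) * T.card := by ring
    _ ≤ ((closedNbhd (cayley p) Vset).card : ℝ) := by
        rw [← hpu]
        exact_mod_cast hTN
end

section
/- Every n-vertex graph admits a (2^{k-1}−1, 4k n^{1/k} (log n)^{1+1/k})-cover for every positive integer k, provided n is large enough that log₂ n > 1. In particular, taking k = ⌈2√(log n)⌉, every sufficiently large n-vertex graph admits a (4^{√(log n)}, 4^{√(log n)})-cover. -/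
open scoped Classical

/-- `f : Fin m → Finset V` is an `(r,K)`-cover of `G`: the sets cover `V(G)`, each
induced subgraph is connected of radius at most `r`, and `∑ i |N⁺(V_i)| ≤ K·n`. -/
noncomputable def IsCover {V : Type*} [Fintype V] (G : SimpleGraph V) (r K : ℝ)
    (m : ℕ) (f : Fin m → Finset V) : Prop :=
  (∀ v : V, ∃ i, v ∈ f i) ∧
  (∀ i, ∃ c : ((f i : Set V)), ∀ u : ((f i : Set V)),
      (G.induce (f i : Set V)).Reachable c u ∧
      (((G.induce (f i : Set V)).dist c u : ℝ) ≤ r)) ∧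
  (∑ i, ((closedNbhd G (f i)).card : ℝ)) ≤ K * (Fintype.card V)

set_option maxHeartbeats 1000000

open Finset

namespace Cover17
variable {V : Type*} [Fintype V] (G : SimpleGraph V)

noncomputable def ball (c : V) (r : ℕ) : Finset V :=
  Finset.univ.filter fun w => G.edist c w ≤ (r : ℕ∞)

variable {G}

lemma mem_ball {c w : V} {r : ℕ} : w ∈ ball G c r ↔ G.edist c w ≤ (r : ℕ∞) := by
  simp [ball]

lemma self_mem_ball (c : V) (r : ℕ) : c ∈ ball G c r := by simp [mem_ball]

lemma mem_ball_comm {c w : V} {r : ℕ} : w ∈ ball G c r ↔ c ∈ ball G w r := by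
  rw [mem_ball, mem_ball, SimpleGraph.edist_comm]

lemma mem_ball_trans {u c v : V} {r ρ : ℕ} (h1 : u ∈ ball G c r) (h2 : c ∈ ball G v ρ) :
    u ∈ ball G v (ρ + r) := by
  rw [mem_ball] at h1 h2 ⊢
  calc G.edist v u ≤ G.edist v c + G.edist c u := SimpleGraph.edist_triangle
    _ ≤ (ρ : ℕ∞) + r := add_le_add h2 h1
    _ = ((ρ + r : ℕ) : ℕ∞) := by exact_mod_cast (Nat.cast_add _ _).symm

lemma closedNbhd_ball_subset {c : V} {r : ℕ} :
    closedNbhd G (ball G c r) ⊆ ball G c (r + 1) := by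
  intro w hw
  rw [closedNbhd, Finset.mem_union] at hw
  rcases hw with hw | hw
  · rw [mem_ball] at hw ⊢
    exact hw.trans (by exact_mod_cast Nat.cast_le.2 (Nat.le_succ r))
  · simp only [Finset.mem_filter] at hw
    obtain ⟨-, x, hx, hadj⟩ := hw
    rw [mem_ball] at hx ⊢
    calc G.edist c w ≤ G.edist c x + G.edist x w := SimpleGraph.edist_triangle
      _ ≤ (r : ℕ∞) + 1 := add_le_add hx (le_of_eq (SimpleGraph.edist_eq_one_iff_adj.2 hadj))
      _ = ((r + 1 : ℕ) : ℕ∞) := by push_cast; rfl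

lemma walk_transfer {s : Set V} : ∀ {a b : V} (p : G.Walk a b) (h : ∀ x ∈ p.support, x ∈ s),
    ∃ q : (G.induce s).Walk ⟨a, h a p.start_mem_support⟩ ⟨b, h b p.end_mem_support⟩,
      q.length = p.length := by
  intro a b p
  induction p with
  | nil => intro _; exact ⟨SimpleGraph.Walk.nil, rfl⟩
  | @cons u x b hadj p ih =>
    intro hs
    have hx : ∀ y ∈ p.support, y ∈ s := fun y hy => hs y (by simp [hy])
    obtain ⟨q, hq⟩ := ih hx
    refine ⟨SimpleGraph.Walk.cons (by simpa using hadj) q, by simp [hq]⟩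

lemma ball_radius {c u : V} {r : ℕ} (hu : u ∈ ball G c r) :
    (G.induce ((ball G c r : Finset V) : Set V)).Reachable
        ⟨c, by exact_mod_cast self_mem_ball c r⟩ ⟨u, by exact_mod_cast hu⟩ ∧
      (G.induce ((ball G c r : Finset V) : Set V)).dist
        ⟨c, by exact_mod_cast self_mem_ball c r⟩ ⟨u, by exact_mod_cast hu⟩ ≤ r := by
  rw [mem_ball] at hu
  have hne : G.edist c u ≠ ⊤ := ne_top_of_le_ne_top (by simp) hu
  obtain ⟨p, hp⟩ := SimpleGraph.exists_walk_of_edist_ne_top hne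
  have hsupp : ∀ x ∈ p.support, x ∈ ((ball G c r : Finset V) : Set V) := by
    intro x hx
    have h1 : G.edist c x ≤ (p.takeUntil x hx).length := SimpleGraph.edist_le _
    have h2 : (p.takeUntil x hx).length ≤ p.length := p.length_takeUntil_le hx
    have : G.edist c x ≤ (r : ℕ∞) := by
      refine h1.trans ?_
      calc ((p.takeUntil x hx).length : ℕ∞) ≤ (p.length : ℕ∞) := by exact_mod_cast h2
        _ = G.edist c u := hp
        _ ≤ r := hu
    exact_mod_cast mem_ball.2 this
  obtain ⟨q, hq⟩ := walk_transfer p hsupp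
  constructor
  · exact ⟨q⟩
  · refine le_trans (SimpleGraph.dist_le q) ?_
    rw [hq]
    have : (p.length : ℕ∞) ≤ (r : ℕ∞) := hp ▸ hu
    exact_mod_cast this

noncomputable def uncov (G : SimpleGraph V) (r : ℕ) (C S : Finset V) : Finset V :=
  S.filter fun v => ∀ c ∈ C, c ∉ ball G v r

lemma exists_good_center (r : ℕ) (b : ℝ) (U : Finset V) (hV : 0 < Fintype.card V)
    (hb : ∀ v ∈ U, b ≤ ((ball G v r).card : ℝ)) :
    ∃ c : V, (U.card : ℝ) * b / (Fintype.card V) ≤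
      ((U.filter fun v => c ∈ ball G v r).card : ℝ) := by
  have key : ∑ c : V, ((U.filter fun v => c ∈ ball G v r).card) = ∑ v ∈ U, (ball G v r).card := by
    simp_rw [Finset.card_filter]
    rw [Finset.sum_comm]
    refine Finset.sum_congr rfl fun v _ => ?_
    rw [← Finset.card_filter]
    simp
  by_contra hcon
  push_neg at hcon
  have h1 : (U.card : ℝ) * b ≤ ∑ v ∈ U, ((ball G v r).card : ℝ) := by
    calc (U.card : ℝ) * b = ∑ _v ∈ U, b := by rw [Finset.sum_const, nsmul_eq_mul]
      _ ≤ _ := Finset.sum_le_sum hb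
  have h2 : ∑ c : V, ((U.filter fun v => c ∈ ball G v r).card : ℝ) <
      ∑ _c : V, (U.card : ℝ) * b / (Fintype.card V) := by
    refine Finset.sum_lt_sum_of_nonempty ?_ fun c _ => hcon c
    exact Finset.univ_nonempty_iff.2 (Fintype.card_pos_iff.1 hV)
  rw [Finset.sum_const, nsmul_eq_mul, Finset.card_univ] at h2
  have h3 : (Fintype.card V : ℝ) * ((U.card : ℝ) * b / (Fintype.card V)) = (U.card : ℝ) * b := by
    field_simp
  rw [h3] at h2
  have h4 : ∑ c : V, ((U.filter fun v => c ∈ ball G v r).card : ℝ) =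
      ∑ v ∈ U, ((ball G v r).card : ℝ) := by
    exact_mod_cast congrArg (Nat.cast : ℕ → ℝ) key
  linarith [h1, h2, h4 ▸ h2]
lemma uncov_insert (r : ℕ) (c : V) (C S : Finset V) :
    uncov G r (insert c C) S = (uncov G r C S).filter fun v => c ∉ ball G v r := by
  ext v
  simp only [uncov, Finset.mem_filter, Finset.forall_mem_insert]
  tauto

lemma halving (r : ℕ) (b : ℝ) (S : Finset V) (hV : 0 < Fintype.card V) (hbpos : 0 < b)
    (hb : ∀ v ∈ S, b ≤ ((ball G v r).card : ℝ)) :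
    ∀ m : ℕ, ∃ C : Finset V, C.card ≤ m ∧
      (2 * (uncov G r C S).card ≤ S.card ∨
        ((uncov G r C S).card : ℝ) ≤
          (S.card : ℝ) - m * (b * S.card / (2 * Fintype.card V))) := by
  intro m
  induction m with
  | zero =>
    refine ⟨∅, le_refl _, Or.inr ?_⟩
    have : uncov G r ∅ S = S := by simp [uncov]
    rw [this]; simp
  | succ m ih =>
    obtain ⟨C, hCcard, hC⟩ := ih
    rcases hC with hC | hC
    · exact ⟨C, hCcard.trans (Nat.le_succ m), Or.inl hC⟩
    by_cases hhalf : 2 * (uncov G r C S).card ≤ S.card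
    · exact ⟨C, hCcard.trans (Nat.le_succ m), Or.inl hhalf⟩
    -- pick a good center
    set U := uncov G r C S with hU
    have hUS : U ⊆ S := Finset.filter_subset _ _
    have hbU : ∀ v ∈ U, b ≤ ((ball G v r).card : ℝ) := fun v hv => hb v (hUS hv)
    obtain ⟨c, hc⟩ := exists_good_center r b U hV hbU
    refine ⟨insert c C, Finset.card_insert_le _ _ |>.trans (Nat.succ_le_succ hCcard), Or.inr ?_⟩
    have hsplit : ((U.filter fun v => c ∈ ball G v r).card : ℝ) +
        ((U.filter fun v => c ∉ ball G v r).card : ℝ) = (U.card : ℝ) := by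
      exact_mod_cast congrArg (Nat.cast : ℕ → ℝ)
        (Finset.card_filter_add_card_filter_not (s := U)
          (p := fun v => c ∈ ball G v r))
    have hrw : uncov G r (insert c C) S = (U.filter fun v => c ∉ ball G v r) := by
      rw [uncov_insert]
    rw [hrw]
    -- U.card > S.card / 2
    have hUbig : (S.card : ℝ) < 2 * (U.card : ℝ) := by exact_mod_cast Nat.lt_of_not_le hhalf
    have hcnt : b * (S.card : ℝ) / (2 * Fintype.card V) ≤
        ((U.filter fun v => c ∈ ball G v r).card : ℝ) := by
      refine le_trans ?_ hc
      have hVpos : (0:ℝ) < (Fintype.card V : ℝ) := by exact_mod_cast hV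
      rw [div_le_div_iff₀ (by positivity) hVpos]
      nlinarith [mul_lt_mul_of_pos_left hUbig (mul_pos hbpos hVpos)]
    have hUle : (U.card : ℝ) ≤ (S.card : ℝ) - m * (b * S.card / (2 * Fintype.card V)) := hC
    push_cast
    nlinarith [hsplit, hcnt, hUle]
lemma transversal (r : ℕ) (b : ℝ) (hb1 : 1 ≤ b) (hV : 0 < Fintype.card V) :
    ∀ S : Finset V, (∀ v ∈ S, b ≤ ((ball G v r).card : ℝ)) →
    ∃ C : Finset V, (∀ v ∈ S, ∃ c ∈ C, c ∈ ball G v r) ∧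
      ((C.card : ℝ) ≤ ((Fintype.card V : ℝ) / b + 1) * (Real.logb 2 (S.card) + 1)) := by
  have hbpos : 0 < b := lt_of_lt_of_le one_pos hb1
  have hfac : (0:ℝ) ≤ (Fintype.card V : ℝ) / b + 1 := by positivity
  suffices H : ∀ N : ℕ, ∀ S : Finset V, S.card ≤ N →
      (∀ v ∈ S, b ≤ ((ball G v r).card : ℝ)) →
      ∃ C : Finset V, (∀ v ∈ S, ∃ c ∈ C, c ∈ ball G v r) ∧
        ((C.card : ℝ) ≤ ((Fintype.card V : ℝ) / b + 1) * (Real.logb 2 (S.card) + 1)) by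
    exact fun S h => H S.card S le_rfl h
  intro N
  induction N with
  | zero =>
    intro S hcard _
    refine ⟨∅, ?_, ?_⟩
    · intro v hv
      exact absurd (Finset.card_eq_zero.1 (Nat.le_zero.1 hcard) ▸ hv) (Finset.notMem_empty v)
    · simp only [Finset.card_empty, Nat.cast_zero]
      have : S.card = 0 := Nat.le_zero.1 hcard
      rw [this]
      simp only [Nat.cast_zero, Real.logb_zero]
      nlinarith [hfac]
  | succ N ih =>
    intro S hcard hb
    -- apply halving with m₀
    set nV : ℝ := (Fintype.card V : ℝ) with hnV
    have hnVpos : (0:ℝ) < nV := by rw [hnV]; exact_mod_cast hV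
    set m₀ : ℕ := ⌈nV / b⌉₊ with hm₀
    obtain ⟨C₁, hC₁card, hC₁⟩ := halving r b S hV hbpos hb m₀
    have hhalf : 2 * (uncov G r C₁ S).card ≤ S.card := by
      rcases hC₁ with h | h
      · exact h
      · have hm₀ge : nV / b ≤ (m₀ : ℝ) := Nat.le_ceil _
        have : ((uncov G r C₁ S).card : ℝ) ≤ (S.card : ℝ) / 2 := by
          have hkey : (S.card : ℝ) / 2 ≤ (m₀ : ℝ) * (b * S.card / (2 * nV)) := by
            have hS0 : (0:ℝ) ≤ (S.card : ℝ) := by positivity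
            have heq : (m₀ : ℝ) * (b * S.card / (2 * nV)) =
                ((m₀ : ℝ) * b / nV) * (S.card / 2) := by field_simp
            rw [heq]
            have h1 : (1:ℝ) ≤ (m₀ : ℝ) * b / nV := by
              rw [le_div_iff₀ hnVpos, one_mul]
              calc nV = (nV / b) * b := by field_simp
                _ ≤ (m₀:ℝ) * b := by nlinarith [Nat.le_ceil (nV / b)]
            nlinarith [h1, hS0]
          linarith [h, hkey]
        have h2 : ((2 * (uncov G r C₁ S).card : ℕ) : ℝ) ≤ ((S.card : ℕ) : ℝ) := by
          push_cast; linarith [this]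
        exact_mod_cast h2
    set S' := uncov G r C₁ S with hS'
    have hS'sub : S' ⊆ S := Finset.filter_subset _ _
    have hS'card : S'.card ≤ N := by omega
    obtain ⟨C₂, hC₂cov, hC₂card⟩ := ih S' hS'card (fun v hv => hb v (hS'sub hv))
    by_cases hS'empty : S' = ∅
    · refine ⟨C₁, ?_, ?_⟩
      · intro v hv
        by_contra hcon
        push_neg at hcon
        have : v ∈ S' := by
          rw [hS', uncov, Finset.mem_filter]
          exact ⟨hv, fun c hc => hcon c hc⟩
        rw [hS'empty] at this
        exact Finset.notMem_empty v this
      · have h1 : (C₁.card : ℝ) ≤ nV / b + 1 := by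
          calc (C₁.card : ℝ) ≤ (m₀ : ℝ) := by exact_mod_cast hC₁card
            _ ≤ nV / b + 1 := le_of_lt (Nat.ceil_lt_add_one (by positivity))
        have hlog : (0:ℝ) ≤ Real.logb 2 S.card := by
          by_cases hS : S = ∅
          · rw [hS]; simp
          · refine Real.logb_nonneg one_lt_two ?_
            have : 1 ≤ S.card := Finset.card_pos.2 (Finset.nonempty_of_ne_empty hS)
            exact_mod_cast this
        nlinarith [h1, hlog, hfac]
    -- S' nonempty
    · have hS'pos : 1 ≤ S'.card := Finset.card_pos.2 (Finset.nonempty_of_ne_empty hS'empty)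
      have hS2 : 2 ≤ S.card := by omega
      refine ⟨C₁ ∪ C₂, ?_, ?_⟩
      · intro v hv
        by_cases h : ∃ c ∈ C₁, c ∈ ball G v r
        · obtain ⟨c, hc1, hc2⟩ := h
          exact ⟨c, Finset.mem_union_left _ hc1, hc2⟩
        · push_neg at h
          have : v ∈ S' := by
            rw [hS', uncov, Finset.mem_filter]
            exact ⟨hv, h⟩
          obtain ⟨c, hc1, hc2⟩ := hC₂cov v this
          exact ⟨c, Finset.mem_union_right _ hc1, hc2⟩
      · have h1 : (C₁.card : ℝ) ≤ nV / b + 1 := by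
          calc (C₁.card : ℝ) ≤ (m₀ : ℝ) := by exact_mod_cast hC₁card
            _ ≤ nV / b + 1 := le_of_lt (Nat.ceil_lt_add_one (by positivity))
        have hcu : ((C₁ ∪ C₂).card : ℝ) ≤ (C₁.card : ℝ) + (C₂.card : ℝ) := by
          exact_mod_cast Finset.card_union_le C₁ C₂
        have hloghalf : Real.logb 2 (S'.card) ≤ Real.logb 2 (S.card) - 1 := by
          have h2 : (S'.card : ℝ) ≤ (S.card : ℝ) / 2 := by
            have : ((2 * S'.card : ℕ) : ℝ) ≤ ((S.card : ℕ) : ℝ) := by exact_mod_cast hhalf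
            push_cast at this
            linarith
          calc Real.logb 2 (S'.card) ≤ Real.logb 2 ((S.card : ℝ) / 2) := by
                have := (Real.logb_le_logb_of_le (b := 2) (by norm_num)
                  (by exact_mod_cast hS'pos) h2)
                exact this
            _ = Real.logb 2 (S.card) - 1 := by
                rw [Real.logb_div (by positivity) (by norm_num)]
                simp
        have hlogS'0 : (0:ℝ) ≤ Real.logb 2 (S'.card) := by
          refine Real.logb_nonneg one_lt_two ?_
          exact_mod_cast hS'pos
        nlinarith [h1, hcu, hC₂card, hloghalf, hfac, hlogS'0]
lemma main (G : SimpleGraph V) (k : ℕ) (hk : 1 ≤ k)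
    (hL : 1 < Real.logb 2 (Fintype.card V)) :
    ∃ (m : ℕ) (f : Fin m → Finset V),
      IsCover G ((2 : ℝ) ^ (k - 1) - 1)
        (4 * k * (Fintype.card V : ℝ) ^ ((1 : ℝ) / k) *
          Real.logb 2 (Fintype.card V) ^ (1 + (1 : ℝ) / k)) m f := by
  classical
  have hV : 0 < Fintype.card V := by
    by_contra h
    have h0 : Fintype.card V = 0 := by omega
    rw [h0] at hL
    norm_num at hL
  set nR : ℝ := (Fintype.card V : ℝ) with hnR
  have hnR1 : 1 ≤ nR := by rw [hnR]; exact_mod_cast hV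
  have hnRpos : (0:ℝ) < nR := lt_of_lt_of_le one_pos hnR1
  set L : ℝ := Real.logb 2 nR with hLdef
  have hL1 : 1 < L := hL
  set Q : ℝ := nR ^ ((1:ℝ)/k) with hQdef
  have hQ1 : 1 ≤ Q := Real.one_le_rpow hnR1 (by positivity)
  have hQpos : (0:ℝ) < Q := lt_of_lt_of_le one_pos hQ1
  have hk0 : (k:ℝ) ≠ 0 := by positivity
  have hQk : Q ^ k = nR := by
    rw [hQdef, ← Real.rpow_natCast (nR ^ ((1:ℝ)/k)) k, ← Real.rpow_mul (le_of_lt hnRpos)]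
    rw [one_div, inv_mul_cancel₀ hk0, Real.rpow_one]
  have hQj_le : ∀ j : ℕ, j ≤ k → Q ^ j ≤ nR := by
    intro j hj
    calc Q ^ j ≤ Q ^ k := pow_le_pow_right₀ hQ1 hj
      _ = nR := hQk
  -- the class of a vertex
  set cls : V → ℕ := fun v =>
    Nat.findGreatest (fun j => Q ^ j ≤ ((ball G v (2 ^ j - 1)).card : ℝ)) (k - 1) with hcls
  have hP0 : ∀ v : V, Q ^ 0 ≤ ((ball G v (2 ^ 0 - 1)).card : ℝ) := by
    intro v
    have : 1 ≤ (ball G v (2 ^ 0 - 1)).card := Finset.card_pos.2 ⟨v, self_mem_ball v _⟩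
    simpa using (by exact_mod_cast this : (1:ℝ) ≤ ((ball G v (2 ^ 0 - 1)).card : ℝ))
  have hPc : ∀ v : V, Q ^ (cls v) ≤ ((ball G v (2 ^ (cls v) - 1)).card : ℝ) := by
    intro v
    have := Nat.findGreatest_spec
      (P := fun j => Q ^ j ≤ ((ball G v (2 ^ j - 1)).card : ℝ)) (Nat.zero_le (k-1)) (hP0 v)
    rw [hcls]
    exact this
  have hcle : ∀ v : V, cls v ≤ k - 1 := by
    intro v
    rw [hcls]
    exact Nat.findGreatest_le _
  have hbig : ∀ v : V, cls v + 1 ≤ k - 1 →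
      ((ball G v (2 ^ (cls v + 1) - 1)).card : ℝ) < Q ^ (cls v + 1) := by
    intro v h
    have hlt : Nat.findGreatest
        (fun j => Q ^ j ≤ ((ball G v (2 ^ j - 1)).card : ℝ)) (k - 1) < cls v + 1 := by
      rw [hcls]
      exact Nat.lt_succ_self _
    have := Nat.findGreatest_is_greatest
      (P := fun j => Q ^ j ≤ ((ball G v (2 ^ j - 1)).card : ℝ)) hlt h
    exact lt_of_not_ge this
  -- classes
  set Scls : ℕ → Finset V := fun j => Finset.univ.filter (fun v => cls v = j) with hScls
  have htrans : ∀ j : ℕ, ∃ C : Finset V,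
      (∀ v ∈ Scls j, ∃ c ∈ C, c ∈ ball G v (2 ^ j - 1)) ∧
      ((C.card : ℝ) ≤ (nR / Q ^ j + 1) * (Real.logb 2 ((Scls j).card) + 1)) := by
    intro j
    refine transversal (2 ^ j - 1) (Q ^ j) (one_le_pow₀ hQ1) hV (Scls j) ?_
    intro v hv
    rw [hScls, Finset.mem_filter] at hv
    rw [← hv.2]
    exact hPc v
  choose C hCcov hCcard using htrans
  set C' : ℕ → Finset V := fun j =>
    (C j).filter (fun c => ∃ v, cls v = j ∧ c ∈ ball G v (2 ^ j - 1)) with hC'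
  -- index type
  set I := (Σ j : Fin k, {c : V // c ∈ C' j.1}) with hI
  set e : I ≃ Fin (Fintype.card I) := Fintype.equivFin I with he
  set F : I → Finset V := fun x => ball G x.2.1 (2 ^ (x.1 : ℕ) - 1) with hF
  refine ⟨Fintype.card I, fun i => F (e.symm i), ?_, ?_, ?_⟩
  · -- coverage
    intro v
    have hjk : cls v < k := by
      have := hcle v
      omega
    have hv : v ∈ Scls (cls v) := by
      rw [hScls, Finset.mem_filter]
      exact ⟨Finset.mem_univ v, rfl⟩
    obtain ⟨c, hcC, hcb⟩ := hCcov (cls v) v hv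
    have hcC' : c ∈ C' (cls v) := by
      rw [hC', Finset.mem_filter]
      exact ⟨hcC, v, rfl, hcb⟩
    refine ⟨e ⟨⟨cls v, hjk⟩, ⟨c, hcC'⟩⟩, ?_⟩
    show v ∈ F (e.symm (e ⟨⟨cls v, hjk⟩, ⟨c, hcC'⟩⟩))
    rw [Equiv.symm_apply_apply]
    exact mem_ball_comm.1 hcb
  · -- radius
    intro i
    set x := e.symm i with hx
    have hfi : F (e.symm i) = ball G x.2.1 (2 ^ (x.1 : ℕ) - 1) := rfl
    refine ⟨⟨x.2.1, by exact_mod_cast self_mem_ball x.2.1 _⟩, ?_⟩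
    rintro ⟨u, hu⟩
    have hu' : u ∈ ball G x.2.1 (2 ^ (x.1 : ℕ) - 1) := by exact_mod_cast hu
    obtain ⟨hreach, hdist⟩ := ball_radius hu'
    refine ⟨hreach, ?_⟩
    have hcast : (((2 ^ (x.1 : ℕ) - 1 : ℕ)) : ℝ) = (2:ℝ) ^ (x.1 : ℕ) - 1 := by
      have h1 : 1 ≤ 2 ^ (x.1 : ℕ) := Nat.one_le_two_pow
      push_cast [h1]
      ring
    calc ((SimpleGraph.dist _ _ _ : ℕ) : ℝ) ≤ ((2 ^ (x.1 : ℕ) - 1 : ℕ) : ℝ) := by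
          exact_mod_cast hdist
      _ = (2:ℝ) ^ (x.1 : ℕ) - 1 := hcast
      _ ≤ (2:ℝ) ^ (k - 1) - 1 := by
          have : (x.1 : ℕ) ≤ k - 1 := by
            have := x.1.2
            omega
          have h2 : (2:ℝ) ^ (x.1 : ℕ) ≤ (2:ℝ) ^ (k-1) :=
            pow_le_pow_right₀ one_le_two this
          linarith
  · -- cost
    have hcard_le : ∀ (s : Finset V), ((s.card : ℝ)) ≤ nR := by
      intro s
      rw [hnR]
      exact_mod_cast Finset.card_le_univ s
    have hlogSj : ∀ j : ℕ, Real.logb 2 ((Scls j).card) ≤ L := by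
      intro j
      by_cases h0 : (Scls j).card = 0
      · rw [h0]
        simp only [Nat.cast_zero, Real.logb_zero]
        linarith
      · rw [hLdef, hnR]
        refine Real.logb_le_logb_of_le one_lt_two ?_ ?_
        · exact_mod_cast Nat.pos_of_ne_zero h0
        · exact_mod_cast Finset.card_le_univ _
    have hclass : ∀ j : Fin k,
        ∑ c ∈ C' (j : ℕ), ((closedNbhd G (ball G c (2 ^ (j : ℕ) - 1))).card : ℝ) ≤
          4 * nR * Q * L := by
      intro j
      have hjk : (j : ℕ) < k := j.2
      have hC'le : ((C' (j : ℕ)).card : ℝ) ≤ (nR / Q ^ (j:ℕ) + 1) * (L + 1) := by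
        calc ((C' (j : ℕ)).card : ℝ) ≤ ((C (j:ℕ)).card : ℝ) := by
              exact_mod_cast Finset.card_filter_le _ _
          _ ≤ (nR / Q ^ (j:ℕ) + 1) * (Real.logb 2 ((Scls (j:ℕ)).card) + 1) := hCcard _
          _ ≤ (nR / Q ^ (j:ℕ) + 1) * (L + 1) := by
              have hpos : (0:ℝ) ≤ nR / Q ^ (j:ℕ) + 1 := by positivity
              have := hlogSj (j:ℕ)
              nlinarith
      have hA1 : (1:ℝ) ≤ nR / Q ^ (j:ℕ) := by
        rw [le_div_iff₀ (by positivity)]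
        simpa using hQj_le (j:ℕ) (le_of_lt hjk)
      by_cases hjtop : (j : ℕ) + 1 < k
      · -- inner classes
        have hper : ∀ c ∈ C' (j : ℕ),
            ((closedNbhd G (ball G c (2 ^ (j : ℕ) - 1))).card : ℝ) ≤ Q ^ ((j:ℕ)+1) := by
          intro c hc
          rw [hC', Finset.mem_filter] at hc
          obtain ⟨-, v, hvcls, hvball⟩ := hc
          have hsub : closedNbhd G (ball G c (2 ^ (j : ℕ) - 1)) ⊆
              ball G v (2 ^ ((j:ℕ)+1) - 1) := by
            intro w hw
            have hw1 : w ∈ ball G c ((2 ^ (j : ℕ) - 1) + 1) := closedNbhd_ball_subset hw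
            have hw2 : w ∈ ball G v ((2 ^ (j:ℕ) - 1) + ((2 ^ (j : ℕ) - 1) + 1)) :=
              mem_ball_trans hw1 hvball
            have harr : (2 ^ (j:ℕ) - 1) + ((2 ^ (j : ℕ) - 1) + 1) = 2 ^ ((j:ℕ)+1) - 1 := by
              have h1 : 1 ≤ 2 ^ (j:ℕ) := Nat.one_le_two_pow
              have h2 : 2 ^ ((j:ℕ)+1) = 2 ^ (j:ℕ) * 2 := pow_succ 2 (j:ℕ)
              omega
            rwa [harr] at hw2
          have hvj : cls v + 1 ≤ k - 1 := by omega
          have := hbig v hvj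
          rw [hvcls] at this
          calc ((closedNbhd G (ball G c (2 ^ (j : ℕ) - 1))).card : ℝ)
              ≤ ((ball G v (2 ^ ((j:ℕ)+1) - 1)).card : ℝ) := by
                exact_mod_cast Finset.card_le_card hsub
            _ ≤ Q ^ ((j:ℕ)+1) := le_of_lt this
        have hsum := Finset.sum_le_card_nsmul (C' (j:ℕ))
          (fun c => ((closedNbhd G (ball G c (2 ^ (j : ℕ) - 1))).card : ℝ))
          (Q ^ ((j:ℕ)+1)) hper
        rw [nsmul_eq_mul] at hsum
        have e1 : (nR / Q ^ (j:ℕ)) * Q ^ ((j:ℕ)+1) = nR * Q := by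
          rw [pow_succ]
          field_simp
        have hQjp : (0:ℝ) < Q ^ ((j:ℕ)+1) := by positivity
        calc ∑ c ∈ C' (j:ℕ), ((closedNbhd G (ball G c (2 ^ (j : ℕ) - 1))).card : ℝ)
            ≤ ((C' (j:ℕ)).card : ℝ) * Q ^ ((j:ℕ)+1) := hsum
          _ ≤ ((nR / Q ^ (j:ℕ) + 1) * (L + 1)) * Q ^ ((j:ℕ)+1) := by
              have : (0:ℝ) ≤ Q ^ ((j:ℕ)+1) := le_of_lt hQjp
              exact mul_le_mul_of_nonneg_right hC'le this
          _ ≤ ((2 * (nR / Q ^ (j:ℕ))) * (2 * L)) * Q ^ ((j:ℕ)+1) := by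
              have h2 : (0:ℝ) < L := by linarith
              have hmul : (nR / Q ^ (j:ℕ) + 1) * (L + 1) ≤ (2 * (nR / Q ^ (j:ℕ))) * (2 * L) := by
                nlinarith [hA1, hL1]
              exact mul_le_mul_of_nonneg_right hmul (le_of_lt hQjp)
          _ = 4 * L * ((nR / Q ^ (j:ℕ)) * Q ^ ((j:ℕ)+1)) := by ring
          _ = 4 * L * (nR * Q) := by rw [e1]
          _ = 4 * nR * Q * L := by ring
      · -- top class
        have hjeq : (j : ℕ) = k - 1 := by omega
        have hper : ∀ c ∈ C' (j : ℕ),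
            ((closedNbhd G (ball G c (2 ^ (j : ℕ) - 1))).card : ℝ) ≤ nR :=
          fun c _ => hcard_le _
        have hsum := Finset.sum_le_card_nsmul (C' (j:ℕ))
          (fun c => ((closedNbhd G (ball G c (2 ^ (j : ℕ) - 1))).card : ℝ)) nR hper
        rw [nsmul_eq_mul] at hsum
        have e2 : nR / Q ^ (j:ℕ) = Q := by
          have hkk : (j:ℕ) + 1 = k := by omega
          have : Q ^ (j:ℕ) * Q = nR := by
            rw [← pow_succ, hkk, hQk]
          rw [eq_comm, eq_div_iff (by positivity)]
          linarith [this]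
        calc ∑ c ∈ C' (j:ℕ), ((closedNbhd G (ball G c (2 ^ (j : ℕ) - 1))).card : ℝ)
            ≤ ((C' (j:ℕ)).card : ℝ) * nR := hsum
          _ ≤ ((nR / Q ^ (j:ℕ) + 1) * (L + 1)) * nR := by
              exact mul_le_mul_of_nonneg_right hC'le (by positivity)
          _ = ((Q + 1) * (L + 1)) * nR := by rw [e2]
          _ ≤ ((2 * Q) * (2 * L)) * nR := by
              have hmul : (Q + 1) * (L + 1) ≤ (2 * Q) * (2 * L) := by nlinarith [hQ1, hL1]
              exact mul_le_mul_of_nonneg_right hmul (by positivity)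
          _ = 4 * nR * Q * L := by ring
    -- assemble
    have hstep1 : ∑ i : Fin (Fintype.card I), ((closedNbhd G (F (e.symm i))).card : ℝ) =
        ∑ x : I, ((closedNbhd G (F x)).card : ℝ) :=
      Equiv.sum_comp e.symm (fun x => ((closedNbhd G (F x)).card : ℝ))
    have hstep2 : ∑ x : I, ((closedNbhd G (F x)).card : ℝ) =
        ∑ j : Fin k, ∑ c : {c : V // c ∈ C' (j:ℕ)},
          ((closedNbhd G (ball G c.1 (2 ^ (j : ℕ) - 1))).card : ℝ) := by
      rw [← Finset.univ_sigma_univ, Finset.sum_sigma]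
    have hstep3 : ∀ j : Fin k, ∑ c : {c : V // c ∈ C' (j:ℕ)},
        ((closedNbhd G (ball G c.1 (2 ^ (j : ℕ) - 1))).card : ℝ) =
        ∑ c ∈ C' (j:ℕ), ((closedNbhd G (ball G c (2 ^ (j : ℕ) - 1))).card : ℝ) := by
      intro j
      exact Finset.sum_coe_sort (C' (j:ℕ))
        (fun c => ((closedNbhd G (ball G c (2 ^ (j : ℕ) - 1))).card : ℝ))
    have htot : ∑ i : Fin (Fintype.card I), ((closedNbhd G (F (e.symm i))).card : ℝ) ≤
        (k : ℝ) * (4 * nR * Q * L) := by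
      rw [hstep1, hstep2]
      calc ∑ j : Fin k, ∑ c : {c : V // c ∈ C' (j:ℕ)},
            ((closedNbhd G (ball G c.1 (2 ^ (j : ℕ) - 1))).card : ℝ)
          ≤ ∑ _j : Fin k, (4 * nR * Q * L) := by
            refine Finset.sum_le_sum ?_
            intro j _
            rw [hstep3 j]
            exact hclass j
        _ = (k : ℝ) * (4 * nR * Q * L) := by
            rw [Finset.sum_const, Finset.card_univ, Fintype.card_fin, nsmul_eq_mul]
    refine le_trans htot ?_
    have hLpow : L ≤ L ^ (1 + (1:ℝ)/k) := by
      nth_rewrite 1 [show L = L ^ (1:ℝ) from (Real.rpow_one L).symm]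
      refine Real.rpow_le_rpow_of_exponent_le (le_of_lt hL1) ?_
      have : (0:ℝ) ≤ 1/(k:ℝ) := by positivity
      linarith
    have hk1 : (1:ℝ) ≤ (k:ℝ) := by exact_mod_cast hk
    calc (k : ℝ) * (4 * nR * Q * L) ≤ (k : ℝ) * (4 * nR * Q * L ^ (1 + (1:ℝ)/k)) := by
          have h0 : (0:ℝ) ≤ (k:ℝ) := by linarith
          have h1 : 4 * nR * Q * L ≤ 4 * nR * Q * L ^ (1 + (1:ℝ)/k) := by
            have : (0:ℝ) ≤ 4 * nR * Q := by positivity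
            exact mul_le_mul_of_nonneg_left hLpow this
          exact mul_le_mul_of_nonneg_left h1 h0
      _ = 4 * (k:ℝ) * Q * L ^ (1 + (1:ℝ)/k) * nR := by ring

lemma aux_rpow_bound (s : ℝ) (hs256 : (256:ℝ) ≤ s) : s ≤ (2:ℝ) ^ (s / 4) := by
  have hs0 : (0:ℝ) < s := by linarith
  have hrw : (2:ℝ) ^ (s/4) = Real.exp (Real.log 2 * (s/4)) := by
    rw [Real.rpow_def_of_pos two_pos]
  set y : ℝ := Real.log 2 * (s / 4) with hy
  have hlog2 : (0.6931471803 : ℝ) < Real.log 2 := Real.log_two_gt_d9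
  have hy0 : 0 ≤ y := by
    have : (0:ℝ) ≤ Real.log 2 := by linarith
    positivity
  have h1 : 1 + y/2 ≤ Real.exp (y/2) := by
    have := Real.add_one_le_exp (y/2)
    linarith
  have h2 : (1 + y/2)^2 ≤ (Real.exp (y/2))^2 := by
    have h0 : (0:ℝ) ≤ 1 + y/2 := by linarith
    have := mul_le_mul h1 h1 h0 (le_trans h0 h1)
    calc (1 + y/2)^2 = (1 + y/2) * (1 + y/2) := by ring
      _ ≤ Real.exp (y/2) * Real.exp (y/2) := this
      _ = (Real.exp (y/2))^2 := by ring
  have h3 : (Real.exp (y/2))^2 = Real.exp y := by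
    rw [sq, ← Real.exp_add]
    congr 1
    ring
  have h4 : s ≤ (1 + y/2)^2 := by
    rw [hy]
    have e1 : (0.48:ℝ) ≤ (Real.log 2)^2 := by nlinarith [hlog2]
    have e2 : 256 * s ≤ s^2 := by nlinarith [hs256, hs0]
    have e4 : (0.48:ℝ) * s^2 ≤ (Real.log 2)^2 * s^2 :=
      mul_le_mul_of_nonneg_right e1 (sq_nonneg s)
    have e5 : 64 * s ≤ (Real.log 2)^2 * s^2 := by nlinarith [e2, e4, hs0]
    have e6 : (Real.log 2 * (s/4) / 2)^2 = (Real.log 2)^2 * s^2 / 64 := by ring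
    have e7 : s ≤ (Real.log 2 * (s/4) / 2)^2 := by rw [e6]; linarith
    have ht0 : 0 ≤ Real.log 2 * (s/4) / 2 := by
      have : (0:ℝ) ≤ Real.log 2 := by linarith
      positivity
    have hexp : (1 + Real.log 2 * (s/4) / 2)^2 =
        1 + 2 * (Real.log 2 * (s/4) / 2) + (Real.log 2 * (s/4) / 2)^2 := by ring
    rw [hexp]
    linarith
  rw [hrw]
  calc s ≤ (1 + y/2)^2 := h4
    _ ≤ (Real.exp (y/2))^2 := h2
    _ = Real.exp y := h3

lemma isCover_mono {r r' K K' : ℝ} {m : ℕ} {f : Fin m → Finset V}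
    (h : IsCover G r K m f) (hr : r ≤ r') (hK : K ≤ K') : IsCover G r' K' m f := by
  obtain ⟨h1, h2, h3⟩ := h
  refine ⟨h1, ?_, ?_⟩
  · intro i
    obtain ⟨c, hc⟩ := h2 i
    exact ⟨c, fun u => ⟨(hc u).1, (hc u).2.trans hr⟩⟩
  · refine h3.trans (mul_le_mul_of_nonneg_right hK (by positivity))

end Cover17

/-- Every `n`-vertex graph admits a `(2^{k−1}−1, 4k n^{1/k} (log₂ n)^{1+1/k})`-cover for
every `k ≥ 1` (provided `log₂ n > 1`), and, in particular, every sufficiently large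
`n`-vertex graph admits a `(4^{√(log₂ n)}, 4^{√(log₂ n)})`-cover. -/
theorem stmt17 :
    (∀ k : ℕ, 1 ≤ k → ∀ (n : ℕ) (G : SimpleGraph (Fin n)),
      1 < Real.logb 2 n →
      ∃ (m : ℕ) (f : Fin m → Finset (Fin n)),
        IsCover G ((2 : ℝ) ^ (k - 1) - 1)
          (4 * k * (n : ℝ) ^ ((1 : ℝ) / k) * Real.logb 2 n ^ (1 + (1 : ℝ) / k)) m f) ∧
    (∃ N : ℕ, ∀ n ≥ N, ∀ G : SimpleGraph (Fin n),
      ∃ (m : ℕ) (f : Fin m → Finset (Fin n)),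
        IsCover G ((4 : ℝ) ^ Real.sqrt (Real.logb 2 n))
          ((4 : ℝ) ^ Real.sqrt (Real.logb 2 n)) m f) := by
  have part1 : ∀ k : ℕ, 1 ≤ k → ∀ (n : ℕ) (G : SimpleGraph (Fin n)),
      1 < Real.logb 2 n →
      ∃ (m : ℕ) (f : Fin m → Finset (Fin n)),
        IsCover G ((2 : ℝ) ^ (k - 1) - 1)
          (4 * k * (n : ℝ) ^ ((1 : ℝ) / k) * Real.logb 2 n ^ (1 + (1 : ℝ) / k)) m f := by
    intro k hk n G hL
    have h := Cover17.main G k hk (by simpa [Fintype.card_fin] using hL)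
    simpa [Fintype.card_fin] using h
  refine ⟨part1, ⟨2 ^ 65536, ?_⟩⟩
  intro n hn G
  have hn0 : 0 < n := lt_of_lt_of_le (Nat.pow_pos (by norm_num)) hn
  set L : ℝ := Real.logb 2 n with hLdef
  have hL65536 : (65536 : ℝ) ≤ L := by
    have h1 : ((2:ℝ) ^ (65536:ℕ)) ≤ (n : ℝ) := by exact_mod_cast hn
    have h2 : Real.logb 2 ((2:ℝ) ^ (65536:ℕ)) = 65536 := by
      rw [Real.logb_pow]
      simp [Real.logb_self_eq_one]
    calc (65536 : ℝ) = Real.logb 2 ((2:ℝ) ^ (65536:ℕ)) := h2.symm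
      _ ≤ L := Real.logb_le_logb_of_le one_lt_two (by positivity) h1
  have hL1 : 1 < L := by linarith
  set s : ℝ := Real.sqrt L with hsdef
  have hL0 : (0:ℝ) ≤ L := by linarith
  have hs256 : (256 : ℝ) ≤ s := by
    rw [hsdef]
    rw [Real.le_sqrt (by norm_num) hL0]
    norm_num
    linarith
  have hs0 : (0:ℝ) < s := by linarith
  have hLs : L = s ^ 2 := (Real.sq_sqrt hL0).symm
  set k : ℕ := ⌈2 * s⌉₊ with hkdef
  have hk1 : 1 ≤ k := Nat.one_le_ceil_iff.2 (by positivity)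
  have hk_lb : 2 * s ≤ (k : ℝ) := Nat.le_ceil _
  have hk_ub : (k : ℝ) ≤ 2 * s + 1 := le_of_lt (Nat.ceil_lt_add_one (by positivity))
  obtain ⟨m, f, hcov⟩ := part1 k hk1 n G hL1
  -- helper facts about powers of two
  have h2two : ((2:ℝ) ^ (2:ℝ)) = 4 := by
    rw [show (2:ℝ) = ((2:ℕ):ℝ) by norm_num, Real.rpow_natCast]
    norm_num
  have h4s : (4:ℝ) ^ s = (2:ℝ) ^ (2 * s) := by
    rw [← h2two, ← Real.rpow_mul (by norm_num : (0:ℝ) ≤ 2)]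
  -- radius bound
  have hrad : (2 : ℝ) ^ (k - 1) - 1 ≤ (4 : ℝ) ^ s := by
    have hcast : (((k - 1 : ℕ)) : ℝ) = (k : ℝ) - 1 := by
      rw [Nat.cast_sub hk1]
      norm_num
    have h1 : (((k - 1 : ℕ)) : ℝ) ≤ 2 * s := by rw [hcast]; linarith
    have h2 : (2:ℝ) ^ (k - 1) = (2:ℝ) ^ ((((k-1:ℕ)):ℝ)) := (Real.rpow_natCast 2 (k-1)).symm
    have h3 : (2:ℝ) ^ ((((k-1:ℕ)):ℝ)) ≤ (2:ℝ) ^ (2*s) :=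
      Real.rpow_le_rpow_of_exponent_le one_le_two h1
    have h4 : (0:ℝ) < (4:ℝ) ^ s := by positivity
    rw [h4s]
    rw [h2]
    linarith
  -- K bound
  have hK : 4 * (k:ℝ) * (n : ℝ) ^ ((1 : ℝ) / k) * L ^ (1 + (1 : ℝ) / k) ≤ (4 : ℝ) ^ s := by
    have hkpos : (0:ℝ) < (k:ℝ) := by exact_mod_cast hk1
    -- n^{1/k} ≤ 2^{s/2}
    have hn_eq : (n:ℝ) = (2:ℝ) ^ L := by
      rw [hLdef]
      exact (Real.rpow_logb two_pos (by norm_num) (by exact_mod_cast hn0)).symm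
    have f2 : (n : ℝ) ^ ((1 : ℝ) / k) ≤ (2:ℝ) ^ (s / 2) := by
      rw [hn_eq, ← Real.rpow_mul (by norm_num : (0:ℝ) ≤ 2)]
      refine Real.rpow_le_rpow_of_exponent_le one_le_two ?_
      have h2s : (0:ℝ) < 2 * s := by linarith
      have hdiv : L * (1 / (k:ℝ)) = L / k := by ring
      rw [hdiv]
      calc L / (k:ℝ) ≤ L / (2 * s) := by
            apply div_le_div_of_nonneg_left hL0 h2s hk_lb
        _ = s / 2 := by
            rw [hLs]
            field_simp
    have f3 : L ^ (1 + (1 : ℝ) / k) ≤ s ^ 4 := by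
      have h1 : L ^ (1 + (1 : ℝ) / k) ≤ L ^ (2:ℝ) := by
        refine Real.rpow_le_rpow_of_exponent_le (le_of_lt hL1) ?_
        have : (1:ℝ)/(k:ℝ) ≤ 1 := by
          rw [div_le_one hkpos]
          exact_mod_cast hk1
        linarith
      have h2 : L ^ (2:ℝ) = s ^ 4 := by
        rw [show (2:ℝ) = ((2:ℕ):ℝ) by norm_num, Real.rpow_natCast, hLs]
        ring
      linarith
    have f1 : 4 * (k:ℝ) ≤ 12 * s := by
      have : (1:ℝ) ≤ s := by linarith
      linarith [hk_ub]
    -- key: s ≤ 2^{s/4}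
    have key : s ≤ (2:ℝ) ^ (s / 4) := Cover17.aux_rpow_bound s hs256
    have key12 : (12:ℝ) ≤ (2:ℝ) ^ (s / 4) := by
      calc (12:ℝ) ≤ 256 := by norm_num
        _ ≤ s := hs256
        _ ≤ (2:ℝ) ^ (s/4) := key
    have keys5 : s ^ 5 ≤ (2:ℝ) ^ (5 * s / 4) := by
      have h1 : s ^ 5 ≤ ((2:ℝ) ^ (s/4)) ^ 5 := by
        refine pow_le_pow_left₀ (by linarith) key 5
      have h2 : ((2:ℝ) ^ (s/4)) ^ 5 = (2:ℝ) ^ (5 * s / 4) := by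
        rw [← Real.rpow_natCast ((2:ℝ) ^ (s/4)) 5, ← Real.rpow_mul (by norm_num : (0:ℝ) ≤ 2)]
        norm_num
        ring_nf
      linarith [le_of_eq h2]
    -- combine
    have hcomb : (12:ℝ) * s ^ 5 * (2:ℝ) ^ (s/2) ≤ (4:ℝ) ^ s := by
      have hp1 : (0:ℝ) < (2:ℝ) ^ (s/2) := by positivity
      have hp2 : (0:ℝ) ≤ s ^ 5 := by positivity
      have h1 : (12:ℝ) * s ^ 5 ≤ (2:ℝ) ^ (s/4) * (2:ℝ) ^ (5*s/4) := by
        have := mul_le_mul key12 keys5 hp2 (by positivity : (0:ℝ) ≤ (2:ℝ)^(s/4))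
        linarith
      have h2 : (12:ℝ) * s ^ 5 * (2:ℝ) ^ (s/2) ≤
          ((2:ℝ) ^ (s/4) * (2:ℝ) ^ (5*s/4)) * (2:ℝ) ^ (s/2) :=
        mul_le_mul_of_nonneg_right h1 (le_of_lt hp1)
      have h3 : ((2:ℝ) ^ (s/4) * (2:ℝ) ^ (5*s/4)) * (2:ℝ) ^ (s/2) = (2:ℝ) ^ (2*s) := by
        rw [← Real.rpow_add two_pos, ← Real.rpow_add two_pos]
        congr 1
        ring
      rw [h4s]
      linarith
    -- product of the three bounds
    have hprod : 4 * (k:ℝ) * (n : ℝ) ^ ((1 : ℝ) / k) * L ^ (1 + (1 : ℝ) / k) ≤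
        (12 * s) * ((2:ℝ) ^ (s/2)) * (s ^ 4) := by
      have p1 : (0:ℝ) ≤ 4 * (k:ℝ) := by positivity
      have p2 : (0:ℝ) ≤ (n : ℝ) ^ ((1 : ℝ) / k) := by positivity
      have p3 : (0:ℝ) ≤ L ^ (1 + (1 : ℝ) / k) := by positivity
      have h12 : 4 * (k:ℝ) * (n : ℝ) ^ ((1 : ℝ) / k) ≤ (12 * s) * ((2:ℝ) ^ (s/2)) :=
        mul_le_mul f1 f2 p2 (by positivity)
      exact mul_le_mul h12 f3 p3 (by positivity)
    have heq : (12 * s) * ((2:ℝ) ^ (s/2)) * (s ^ 4) = 12 * s ^ 5 * (2:ℝ) ^ (s/2) := by ring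
    calc 4 * (k:ℝ) * (n : ℝ) ^ ((1 : ℝ) / k) * L ^ (1 + (1 : ℝ) / k)
        ≤ (12 * s) * ((2:ℝ) ^ (s/2)) * (s ^ 4) := hprod
      _ = 12 * s ^ 5 * (2:ℝ) ^ (s/2) := heq
      _ ≤ (4:ℝ) ^ s := hcomb
  exact ⟨m, f, Cover17.isCover_mono hcov hrad hK⟩
end
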